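/- arXiv:2110.10676 — 3 statements merged into one kernel-verified Lean document; each statement's English description precedes it below -/
import Mathlib

section
/- Let X be a finite connected poset and F a field. Then every Jordan automorphism of I(X,F), i.e. every bijective F-linear map φ: I(X,F) → I(X,F) satisfying φ(f²) = φ(f)² and φ(fgf) = φ(f)φ(g)φ(f) for all f, g ∈ I(X,F), is either an automorphism of I(X,F) or an anti-automorphism of I(X,F). -/
open IncidenceAlgebra Finset

/-- A poset is connected if any two elements can be joined by a sequence of elements
in which consecutive elements are comparable. -/
def PosetConnected (X : Type*) [PartialOrder X] : Prop :=
  ∀ x y : X, Relation.ReflTransGen (fun a b : X => a ≤ b ∨ b ≤ a) x y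

set_option linter.unusedSectionVars false
set_option maxHeartbeats 1000000

namespace StmtAux

variable {X : Type*} [PartialOrder X] [Fintype X] [LocallyFiniteOrder X] [DecidableEq X]
variable {F : Type*} [Field F]

/-- The "matrix unit" supported at `(x, y)`; zero if `¬ x ≤ y`. -/
noncomputable def EE (F : Type*) [Field F] {X : Type*} [PartialOrder X] (x y : X)
    [DecidableEq X] : IncidenceAlgebra F X :=
  letI : Decidable (x ≤ y) := Classical.dec _
  if hxy : x ≤ y then
    ⟨fun a b => if a = x ∧ b = y then 1 else 0, fun a b hab => by
      simp only [ite_eq_right_iff, and_imp]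
      rintro rfl rfl
      exact absurd hxy hab⟩
  else 0

lemma EE_apply {x y : X} (h : x ≤ y) (a b : X) :
    EE F x y a b = if a = x ∧ b = y then 1 else 0 := by
  rw [EE]; rw [dif_pos h]; rfl

lemma EE_of_not_le {x y : X} (h : ¬ x ≤ y) : EE F x y = 0 := by rw [EE]; rw [dif_neg h]

lemma EE_ne_zero {x y : X} (h : x ≤ y) : EE F x y ≠ (0 : IncidenceAlgebra F X) := by
  intro h0
  have := congrArg (fun f : IncidenceAlgebra F X => f x y) h0
  simp [EE_apply h] at this

lemma sum_apply {ι : Type*} (s : Finset ι) (f : ι → IncidenceAlgebra F X) (a b : X) :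
    (∑ i ∈ s, f i) a b = ∑ i ∈ s, f i a b := by
  induction s using Finset.cons_induction with
  | empty => simp [IncidenceAlgebra.zero_apply]
  | cons i s hi ih => simp [Finset.sum_cons, IncidenceAlgebra.add_apply, ih]

lemma EE_mul_EE {x y z w : X} (hxy : x ≤ y) (hzw : z ≤ w) :
    EE F x y * EE F z w = if y = z then EE F x w else 0 := by
  ext a b hab
  rw [mul_apply]
  have hterm : ∀ t ∈ Icc a b,
      EE F x y a t * EE F z w t b
        = if t = y then (if a = x ∧ b = w ∧ y = z then (1:F) else 0) else 0 := by
    intro t ht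
    rw [EE_apply hxy, EE_apply hzw]
    split_ifs <;> simp_all
  rw [Finset.sum_congr rfl hterm, Finset.sum_ite_eq' (Icc a b) y]
  by_cases hyz : y = z
  · subst hyz
    rw [if_pos rfl, EE_apply (hxy.trans hzw)]
    by_cases hax : a = x
    · subst hax
      by_cases hbw : b = w
      · subst hbw
        have : y ∈ Icc a b := by rw [mem_Icc]; exact ⟨hxy, hzw⟩
        simp [this]
      · simp [hbw]
    · simp [hax]
  · simp [hyz, IncidenceAlgebra.zero_apply]

lemma decomp (v : IncidenceAlgebra F X) :
    v = ∑ p : X × X, v p.1 p.2 • EE F p.1 p.2 := by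
  ext a b hab
  rw [sum_apply]
  rw [Finset.sum_eq_single (a, b)]
  · simp [constSMul_apply, EE_apply hab]
  · rintro ⟨c, d⟩ - hne
    rw [constSMul_apply]
    by_cases hcd : c ≤ d
    · rw [EE_apply hcd]
      have : ¬(a = c ∧ b = d) := by
        rintro ⟨rfl, rfl⟩; exact hne rfl
      simp [this]
    · simp [EE_of_not_le hcd, IncidenceAlgebra.zero_apply]
  · intro h; exact absurd (Finset.mem_univ _) h

/-- Incidence algebra product as a sum over the whole type. -/
lemma mul_apply_univ (f g : IncidenceAlgebra F X) (a b : X) :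
    (f * g) a b = ∑ z, f a z * g z b := by
  by_cases hab : a ≤ b
  · rw [mul_apply]
    apply Finset.sum_subset (Finset.subset_univ _)
    intro z _ hz
    rw [mem_Icc] at hz
    push_neg at hz
    by_cases haz : a ≤ z
    · rw [apply_eq_zero_of_not_le (hz haz), mul_zero]
    · rw [apply_eq_zero_of_not_le haz, zero_mul]
  · rw [apply_eq_zero_of_not_le hab]
    refine (Finset.sum_eq_zero fun z _ => ?_).symm
    by_cases haz : a ≤ z
    · by_cases hzb : z ≤ b
      · exact absurd (haz.trans hzb) hab
      · rw [apply_eq_zero_of_not_le hzb, mul_zero]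
    · rw [apply_eq_zero_of_not_le haz, zero_mul]

/-- The action of an incidence algebra element on `X → F` as a linear map. -/
noncomputable def toLin (f : IncidenceAlgebra F X) : (X → F) →ₗ[F] (X → F) :=
  Matrix.mulVecLin (Matrix.of fun a b => f a b)

lemma toLin_apply (f : IncidenceAlgebra F X) (v : X → F) (a : X) :
    toLin f v a = ∑ b, f a b * v b := by
  simp [toLin, Matrix.mulVecLin_apply, Matrix.mulVec, dotProduct]

lemma toLin_mul (f g : IncidenceAlgebra F X) (v : X → F) :
    toLin (f * g) v = toLin f (toLin g v) := by
  funext a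
  simp only [toLin_apply, mul_apply_univ, Finset.sum_mul, Finset.mul_sum, mul_assoc]
  rw [Finset.sum_comm]

lemma toLin_one (v : X → F) : toLin (1 : IncidenceAlgebra F X) v = v := by
  funext a
  simp [toLin_apply, one_apply, ite_mul]

lemma toLin_sum {ι : Type*} (s : Finset ι) (f : ι → IncidenceAlgebra F X) (v : X → F) :
    toLin (∑ i ∈ s, f i) v = ∑ i ∈ s, toLin (f i) v := by
  funext a
  rw [toLin_apply, Finset.sum_apply]
  simp only [toLin_apply, sum_apply, Finset.sum_mul]
  rw [Finset.sum_comm]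

lemma eq_zero_of_toLin (f : IncidenceAlgebra F X) (h : ∀ v, toLin f v = 0) : f = 0 := by
  ext a b hab
  have := congrFun (h (Pi.single b 1)) a
  rw [toLin_apply] at this
  simpa [Pi.single_apply, mul_ite] using this

/-- A system of orthogonal nonzero idempotents of cardinality `#X` summing to `1`:
each has a rank-one range. -/
lemma rank_one_system (f : X → IncidenceAlgebra F X)
    (horth : ∀ s t, f s * f t = if s = t then f s else 0)
    (hsum : ∑ t, f t = 1) (hne : ∀ t, f t ≠ 0) (t₀ : X) :
    ∃ u : X → F, u ≠ 0 ∧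
      ∀ w ∈ LinearMap.range (toLin (f t₀)), ∃ c : F, w = c • u := by
  classical
  set W : X → Submodule F (X → F) := fun t => LinearMap.range (toLin (f t)) with hW
  -- the summation map is a linear bijection from the product of the ranges
  let m : (∀ t, W t) →ₗ[F] (X → F) :=
    { toFun := fun w => ∑ t, (w t : X → F)
      map_add' := by intro w₁ w₂; simp [Finset.sum_add_distrib]
      map_smul' := by intro c w; simp [Finset.smul_sum] }
  have hproj : ∀ (s t : X) (v : X → F), toLin (f s) (toLin (f t) v)
      = if s = t then toLin (f t) v else 0 := by
    intro s t v
    rw [← toLin_mul, horth]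
    split_ifs with h
    · subst h; rfl
    · show toLin (0 : IncidenceAlgebra F X) v = 0
      funext a; simp [toLin_apply, IncidenceAlgebra.zero_apply]
  have hminj : Function.Injective m := by
    rw [injective_iff_map_eq_zero]
    intro w hw
    funext s
    obtain ⟨v, hv⟩ := (w s).2
    have h1 : toLin (f s) (∑ t, (w t : X → F)) = 0 := by
      show toLin (f s) (m w) = 0
      rw [hw, map_zero]
    rw [map_sum] at h1
    have h2 : ∀ t ∈ Finset.univ, t ≠ s → toLin (f s) ((w t : X → F)) = 0 := by
      intro t _ hts
      obtain ⟨vt, hvt⟩ := (w t).2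
      rw [← hvt, hproj, if_neg (Ne.symm hts)]
    rw [Finset.sum_eq_single_of_mem s (Finset.mem_univ s) h2] at h1
    rw [← hv, hproj, if_pos rfl] at h1
    rw [hv] at h1
    exact Subtype.ext h1
  have hmsurj : Function.Surjective m := by
    intro v
    refine ⟨fun t => ⟨toLin (f t) v, LinearMap.mem_range_self _ v⟩, ?_⟩
    show ∑ t, toLin (f t) v = v
    rw [← toLin_sum, hsum, toLin_one]
  have e : (∀ t, W t) ≃ₗ[F] (X → F) := LinearEquiv.ofBijective m ⟨hminj, hmsurj⟩
  have hcard : ∑ t, Module.finrank F (W t) = Fintype.card X := by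
    rw [← Module.finrank_pi_fintype F (M := fun t => W t), e.finrank_eq, Module.finrank_pi]
  have hge : ∀ t, 1 ≤ Module.finrank F (W t) := by
    intro t
    rw [Nat.one_le_iff_ne_zero]
    intro h0
    have : W t = ⊥ := Submodule.finrank_eq_zero.1 h0
    apply hne t
    apply eq_zero_of_toLin
    intro v
    have hmem : toLin (f t) v ∈ W t := LinearMap.mem_range_self _ v
    rw [this, Submodule.mem_bot] at hmem
    exact hmem
  have hone : ∀ t, Module.finrank F (W t) = 1 := by
    intro t
    by_contra hnot
    have h2 : 2 ≤ Module.finrank F (W t) := by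
      have := hge t
      omega
    have : (∑ _t : X, (1:ℕ)) < ∑ t, Module.finrank F (W t) := by
      apply Finset.sum_lt_sum (fun i _ => hge i) ⟨t, Finset.mem_univ t, by omega⟩
    simp only [Finset.sum_const, Finset.card_univ, smul_eq_mul, mul_one] at this
    omega
  -- extract a spanning vector
  have hbot : W t₀ ≠ ⊥ := by
    intro h
    have h0 : Module.finrank F (W t₀) = 0 := Submodule.finrank_eq_zero.2 h
    rw [hone t₀] at h0
    exact one_ne_zero h0
  obtain ⟨u, hu, hune⟩ := Submodule.exists_mem_ne_zero_of_ne_bot hbot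
  refine ⟨u, hune, ?_⟩
  intro w hw
  have hspan : Submodule.span F {u} = W t₀ := by
    apply Submodule.eq_of_le_of_finrank_le
    · rw [Submodule.span_le, Set.singleton_subset_iff]; exact hu
    · rw [hone t₀, finrank_span_singleton hune]
  have hw' : w ∈ W t₀ := hw
  rw [← hspan] at hw'
  obtain ⟨c, hc⟩ := Submodule.mem_span_singleton.1 hw' 
  exact ⟨c, hc.symm⟩

/-- Product with a rank-one "pivot" is nonzero. -/
lemma mul_ne_zero_of_pivot (f p q : IncidenceAlgebra F X)
    (hu : ∃ u : X → F, u ≠ 0 ∧ ∀ w ∈ LinearMap.range (toLin f), ∃ c : F, w = c • u)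
    (hp : p * f = p) (hq : f * q = q) (hp0 : p ≠ 0) (hq0 : q ≠ 0) : p * q ≠ 0 := by
  obtain ⟨u, hu0, hspan⟩ := hu
  -- q hits a nonzero multiple of u
  have hqv : ∃ v, toLin q v ≠ 0 := by
    by_contra h
    push_neg at h
    exact hq0 (eq_zero_of_toLin q fun v => h v)
  obtain ⟨v, hv⟩ := hqv
  have hqvr : toLin q v ∈ LinearMap.range (toLin f) := by
    rw [← hq, toLin_mul]
    exact LinearMap.mem_range_self _ _
  obtain ⟨c, hc⟩ := hspan _ hqvr
  have hc0 : c ≠ 0 := by rintro rfl; rw [hc, zero_smul] at hv; exact hv rfl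
  -- p does not kill u
  have hpu : toLin p u ≠ 0 := by
    have hpv : ∃ v', toLin p v' ≠ 0 := by
      by_contra h
      push_neg at h
      exact hp0 (eq_zero_of_toLin p fun v' => h v')
    obtain ⟨v', hv'⟩ := hpv
    have hfv : toLin f v' ∈ LinearMap.range (toLin f) := LinearMap.mem_range_self _ _
    obtain ⟨c', hc'⟩ := hspan _ hfv
    have : toLin p v' = c' • toLin p u := by
      conv_lhs => rw [← hp, toLin_mul, hc']
      rw [map_smul]
    intro h0
    rw [this, h0, smul_zero] at hv'
    exact hv' rfl
  intro h0
  have : toLin (p * q) v = c • toLin p u := by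
    rw [toLin_mul, hc, map_smul]
  rw [h0] at this
  have : (0 : X → F) = c • toLin p u := by
    rw [← this]; funext a; simp [toLin_apply, IncidenceAlgebra.zero_apply]
  rcases smul_eq_zero.1 this.symm with h | h
  · exact hc0 h
  · exact hpu h

section Main

variable {φ : IncidenceAlgebra F X →ₗ[F] IncidenceAlgebra F X}

/-- images of the diagonal idempotents -/
noncomputable def ff (φ : IncidenceAlgebra F X →ₗ[F] IncidenceAlgebra F X) (t : X) :
    IncidenceAlgebra F X := φ (EE F t t)

/-- images of the matrix units -/
noncomputable def uu (φ : IncidenceAlgebra F X →ₗ[F] IncidenceAlgebra F X) (x y : X) :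
    IncidenceAlgebra F X := φ (EE F x y)

/-- "straight" Peirce component -/
noncomputable def aa (φ : IncidenceAlgebra F X →ₗ[F] IncidenceAlgebra F X) (x y : X) :
    IncidenceAlgebra F X := ff φ x * uu φ x y * ff φ y

/-- "twisted" Peirce component -/
noncomputable def bb (φ : IncidenceAlgebra F X →ₗ[F] IncidenceAlgebra F X) (x y : X) :
    IncidenceAlgebra F X := ff φ y * uu φ x y * ff φ x

lemma jordan2 (hsq : ∀ f, φ (f * f) = φ f * φ f) (v w : IncidenceAlgebra F X) :
    φ (v * w + w * v) = φ v * φ w + φ w * φ v := by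
  have h := hsq (v + w)
  have e1 : (v + w) * (v + w) = v * v + (v * w + w * v) + w * w := by noncomm_ring
  rw [e1, map_add, map_add, hsq v, hsq w] at h
  rw [map_add φ v w] at h
  have e2 : (φ v + φ w) * (φ v + φ w)
      = φ v * φ v + (φ v * φ w + φ w * φ v) + φ w * φ w := by noncomm_ring
  rw [e2] at h
  exact add_left_cancel (add_right_cancel h)

lemma jordan3 (htriple : ∀ f g, φ (f * g * f) = φ f * φ g * φ f)
    (v w z : IncidenceAlgebra F X) :
    φ (v * w * z + z * w * v) = φ v * φ w * φ z + φ z * φ w * φ v := by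
  have h := htriple (v + z) w
  have e1 : (v + z) * w * (v + z) = v * w * v + (v * w * z + z * w * v) + z * w * z := by
    noncomm_ring
  rw [e1, map_add, map_add, htriple v w, htriple z w] at h
  rw [map_add φ v z] at h
  have e2 : (φ v + φ z) * φ w * (φ v + φ z)
      = φ v * φ w * φ v + (φ v * φ w * φ z + φ z * φ w * φ v) + φ z * φ w * φ z := by
    noncomm_ring
  rw [e2] at h
  exact add_left_cancel (add_right_cancel h)

lemma phi_one (hbij : Function.Bijective φ)
    (hsq : ∀ f, φ (f * f) = φ f * φ f)
    (htriple : ∀ f g, φ (f * g * f) = φ f * φ g * φ f) :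
    φ 1 = 1 := by
  obtain ⟨g, hg⟩ := hbij.2 1
  have he := htriple 1 g
  rw [one_mul, mul_one, hg] at he
  rw [mul_one] at he
  have h2 := hsq 1
  rw [one_mul] at h2
  rw [← h2] at he
  exact he.symm

lemma ff_idem (hsq : ∀ f, φ (f * f) = φ f * φ f) (t : X) : ff φ t * ff φ t = ff φ t := by
  have h := hsq (EE F t t)
  rw [EE_mul_EE le_rfl le_rfl, if_pos rfl] at h
  exact h.symm

lemma ff_orth (hsq : ∀ f, φ (f * f) = φ f * φ f)
    (htriple : ∀ f g, φ (f * g * f) = φ f * φ g * φ f)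
    {s t : X} (hst : s ≠ t) : ff φ s * ff φ t = 0 := by
  have huv : ff φ s * ff φ t + ff φ t * ff φ s = 0 := by
    have h := jordan2 hsq (EE F s s) (EE F t t)
    rw [EE_mul_EE le_rfl le_rfl, if_neg hst, EE_mul_EE le_rfl le_rfl,
      if_neg (Ne.symm hst), add_zero, map_zero] at h
    exact h.symm
  have huvu : ff φ s * ff φ t * ff φ s = 0 := by
    have h := htriple (EE F s s) (EE F t t)
    rw [EE_mul_EE le_rfl le_rfl, if_neg hst, zero_mul, map_zero] at h
    exact h.symm
  have hneg : ff φ t * ff φ s = -(ff φ s * ff φ t) := by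
    have := huv
    linear_combination (norm := noncomm_ring) this
  have h3 : ff φ t * ff φ s * ff φ s = ff φ t * ff φ s := by
    rw [mul_assoc, ff_idem hsq]
  rw [hneg, neg_mul] at h3
  have h4 : ff φ s * ff φ t * ff φ s = ff φ s * ff φ t := by
    have := neg_injective h3
    exact this
  rw [huvu] at h4
  exact h4.symm

lemma ff_sum (hphi1 : φ 1 = 1) : ∑ t, ff φ t = 1 := by
  have hone : (1 : IncidenceAlgebra F X) = ∑ t : X, EE F t t := by
    ext a b hab
    rw [one_apply, sum_apply]
    rw [Finset.sum_eq_single a]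
    · rw [EE_apply le_rfl]
      by_cases h : a = b
      · subst h; simp
      · simp [h, Ne.symm h]
    · intro c _ hca
      rw [EE_apply le_rfl]
      simp [Ne.symm hca]
    · intro h; exact absurd (Finset.mem_univ _) h
  calc ∑ t, ff φ t = φ (∑ t : X, EE F t t) := by rw [map_sum]; rfl
    _ = φ 1 := by rw [← hone]
    _ = 1 := hphi1

lemma ff_ne_zero (hbij : Function.Bijective φ) (t : X) : ff φ t ≠ 0 := by
  intro h
  have : EE F t t = 0 := by
    apply hbij.1
    rw [map_zero]
    exact h
  exact EE_ne_zero le_rfl this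

lemma mzero_left {R : Type*} [Ring R] {a b : R} (h : a * b = 0) (w : R) :
    a * (b * w) = 0 := by rw [← mul_assoc, h, zero_mul]

lemma mcollapse {R : Type*} [Ring R] {a b c : R} (h : a * b = c) (w : R) :
    a * (b * w) = c * w := by rw [← mul_assoc, h]

lemma u_diag_zero (htriple : ∀ f g, φ (f * g * f) = φ f * φ g * φ f)
    {x y : X} (hxy : x < y) (z : X) : ff φ z * uu φ x y * ff φ z = 0 := by
  have h := htriple (EE F z z) (EE F x y)
  rw [EE_mul_EE le_rfl hxy.le] at h
  by_cases hzx : z = x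
  · subst hzx
    rw [if_pos rfl, EE_mul_EE hxy.le le_rfl, if_neg (ne_of_gt hxy), map_zero] at h
    exact h.symm
  · rw [if_neg hzx, zero_mul, map_zero] at h
    exact h.symm

lemma u_off_zero (hsq : ∀ f, φ (f * f) = φ f * φ f)
    (htriple : ∀ f g, φ (f * g * f) = φ f * φ g * φ f)
    {x y : X} (hxy : x < y) {z w : X} (hzw : z ≠ w)
    (h1 : (z, w) ≠ (x, y)) (h2 : (z, w) ≠ (y, x)) :
    ff φ z * uu φ x y * ff φ w = 0 := by
  have h := jordan3 htriple (EE F z z) (EE F x y) (EE F w w)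
  have hs1 : EE F z z * EE F x y * EE F w w = 0 := by
    rw [EE_mul_EE le_rfl hxy.le]
    by_cases hzx : z = x
    · subst hzx
      rw [if_pos rfl, EE_mul_EE hxy.le le_rfl]
      have hyw : y ≠ w := by
        intro hyw
        exact h1 (by rw [hyw])
      rw [if_neg hyw]
    · rw [if_neg hzx, zero_mul]
  have hs2 : EE F w w * EE F x y * EE F z z = 0 := by
    rw [EE_mul_EE le_rfl hxy.le]
    by_cases hwx : w = x
    · subst hwx
      rw [if_pos rfl, EE_mul_EE hxy.le le_rfl]
      have hyz : y ≠ z := by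
        intro hyz
        exact h2 (by rw [hyz])
      rw [if_neg hyz]
    · rw [if_neg hwx, zero_mul]
  rw [hs1, hs2, add_zero, map_zero] at h
  have S : ff φ z * uu φ x y * ff φ w + ff φ w * uu φ x y * ff φ z = 0 := h.symm
  have h1' : ff φ z * (ff φ z * uu φ x y * ff φ w + ff φ w * uu φ x y * ff φ z) * ff φ w
      = 0 := by rw [S, mul_zero, zero_mul]
  rw [mul_add, add_mul] at h1'
  have e1 : ff φ z * (ff φ z * uu φ x y * ff φ w) * ff φ w = ff φ z * uu φ x y * ff φ w := by
    simp only [mul_assoc]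
    rw [ff_idem hsq w, mcollapse (ff_idem hsq z)]
  have e2 : ff φ z * (ff φ w * uu φ x y * ff φ z) * ff φ w = 0 := by
    simp only [mul_assoc]
    rw [mzero_left (ff_orth hsq htriple hzw)]
  rw [e1, e2, add_zero] at h1'
  exact h1'

lemma u_decomp (htriple : ∀ f g, φ (f * g * f) = φ f * φ g * φ f)
    {x y : X} (hxy : x < y) : uu φ x y = aa φ x y + bb φ x y := by
  have h := jordan3 htriple (EE F x x) (EE F x y) (EE F y y)
  have hs1 : EE F x x * EE F x y * EE F y y = EE F x y := by
    rw [EE_mul_EE le_rfl hxy.le, if_pos rfl, EE_mul_EE hxy.le le_rfl, if_pos rfl]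
  have hs2 : EE F y y * EE F x y * EE F x x = 0 := by
    rw [EE_mul_EE le_rfl hxy.le, if_neg (ne_of_gt hxy), zero_mul]
  rw [hs1, hs2, add_zero] at h
  exact h

lemma u_mid_y (htriple : ∀ f g, φ (f * g * f) = φ f * φ g * φ f)
    {x y : X} (hxy : x < y) : uu φ x y * ff φ y * uu φ x y = 0 := by
  have h := htriple (EE F x y) (EE F y y)
  rw [EE_mul_EE hxy.le le_rfl, if_pos rfl, EE_mul_EE hxy.le hxy.le,
    if_neg (ne_of_gt hxy), map_zero] at h
  exact h.symm

lemma u_mid_x (htriple : ∀ f g, φ (f * g * f) = φ f * φ g * φ f)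
    {x y : X} (hxy : x < y) : uu φ x y * ff φ x * uu φ x y = 0 := by
  have h := htriple (EE F x y) (EE F x x)
  rw [EE_mul_EE hxy.le le_rfl, if_neg (ne_of_gt hxy), zero_mul, map_zero] at h
  exact h.symm

lemma aa_mul_bb (hsq : ∀ f, φ (f * f) = φ f * φ f)
    (htriple : ∀ f g, φ (f * g * f) = φ f * φ g * φ f)
    {x y : X} (hxy : x < y) : aa φ x y * bb φ x y = 0 := by
  rw [aa, bb]
  simp only [mul_assoc]
  rw [mcollapse (ff_idem hsq y)]
  have h : uu φ x y * (ff φ y * (uu φ x y * ff φ x)) = 0 := by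
    rw [← mul_assoc, ← mul_assoc, u_mid_y htriple hxy, zero_mul]
  rw [h, mul_zero]

lemma bb_mul_aa (hsq : ∀ f, φ (f * f) = φ f * φ f)
    (htriple : ∀ f g, φ (f * g * f) = φ f * φ g * φ f)
    {x y : X} (hxy : x < y) : bb φ x y * aa φ x y = 0 := by
  rw [aa, bb]
  simp only [mul_assoc]
  rw [mcollapse (ff_idem hsq x)]
  have h : uu φ x y * (ff φ x * (uu φ x y * ff φ y)) = 0 := by
    rw [← mul_assoc, ← mul_assoc, u_mid_x htriple hxy, zero_mul]
  rw [h, mul_zero]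

lemma tri_tri_zero {R : Type*} [Ring R] {A u B C v D : R} (h : B * C = 0) :
    A * u * B * (C * v * D) = 0 := by
  simp only [mul_assoc]
  have h2 : B * (C * (v * D)) = 0 := mzero_left h _
  rw [h2, mul_zero, mul_zero]

lemma clemma_a (hsq : ∀ f, φ (f * f) = φ f * φ f)
    (htriple : ∀ f g, φ (f * g * f) = φ f * φ g * φ f)
    (v : IncidenceAlgebra F X) {x y : X} (hxy : x < y) :
    ff φ x * φ v * ff φ y = v x y • aa φ x y := by
  have hv : φ v = ∑ p : X × X, v p.1 p.2 • uu φ p.1 p.2 := by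
    conv_lhs => rw [decomp v]
    rw [map_sum]
    exact Finset.sum_congr rfl fun p _ => by rw [map_smul]; rfl
  rw [hv, Finset.mul_sum, Finset.sum_mul]
  have : ∀ p : X × X, ff φ x * (v p.1 p.2 • uu φ p.1 p.2) * ff φ y
      = v p.1 p.2 • (ff φ x * uu φ p.1 p.2 * ff φ y) := by
    intro p
    rw [mul_smul_comm, smul_mul_assoc]
  rw [Finset.sum_congr rfl fun p _ => this p]
  rw [Finset.sum_eq_single (x, y)]
  · rfl
  · rintro ⟨z, w⟩ - hne
    have hz : ff φ x * uu φ z w * ff φ y = 0 := by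
      by_cases hzw : z ≤ w
      · rcases eq_or_lt_of_le hzw with heq | hlt
        · subst heq
          show ff φ x * ff φ z * ff φ y = 0
          by_cases hzx : z = x
          · subst hzx
            rw [ff_idem hsq, ff_orth hsq htriple (ne_of_lt hxy)]
          · rw [ff_orth hsq htriple (fun h => hzx h.symm), zero_mul]
        · refine u_off_zero hsq htriple hlt (ne_of_lt hxy) (Ne.symm hne) ?_
          rintro h
          rw [Prod.mk.injEq] at h
          obtain ⟨rfl, rfl⟩ := h
          exact absurd hlt (asymm hxy)
      · rw [uu, EE_of_not_le hzw, map_zero, mul_zero, zero_mul]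
    rw [hz, smul_zero]
  · intro h; exact absurd (Finset.mem_univ _) h

lemma clemma_b (hsq : ∀ f, φ (f * f) = φ f * φ f)
    (htriple : ∀ f g, φ (f * g * f) = φ f * φ g * φ f)
    (v : IncidenceAlgebra F X) {x y : X} (hxy : x < y) :
    ff φ y * φ v * ff φ x = v x y • bb φ x y := by
  have hv : φ v = ∑ p : X × X, v p.1 p.2 • uu φ p.1 p.2 := by
    conv_lhs => rw [decomp v]
    rw [map_sum]
    exact Finset.sum_congr rfl fun p _ => by rw [map_smul]; rfl
  rw [hv, Finset.mul_sum, Finset.sum_mul]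
  have : ∀ p : X × X, ff φ y * (v p.1 p.2 • uu φ p.1 p.2) * ff φ x
      = v p.1 p.2 • (ff φ y * uu φ p.1 p.2 * ff φ x) := by
    intro p
    rw [mul_smul_comm, smul_mul_assoc]
  rw [Finset.sum_congr rfl fun p _ => this p]
  rw [Finset.sum_eq_single (x, y)]
  · rfl
  · rintro ⟨z, w⟩ - hne
    have hz : ff φ y * uu φ z w * ff φ x = 0 := by
      by_cases hzw : z ≤ w
      · rcases eq_or_lt_of_le hzw with heq | hlt
        · subst heq
          show ff φ y * ff φ z * ff φ x = 0
          by_cases hzy : z = y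
          · subst hzy
            rw [ff_idem hsq, ff_orth hsq htriple (ne_of_gt hxy)]
          · rw [ff_orth hsq htriple (fun h => hzy h.symm), zero_mul]
        · refine u_off_zero hsq htriple hlt (ne_of_gt hxy) ?_ ?_
          · rintro h
            rw [Prod.mk.injEq] at h
            obtain ⟨rfl, rfl⟩ := h
            exact absurd hlt (asymm hxy)
          · rintro h
            rw [Prod.mk.injEq] at h
            obtain ⟨rfl, rfl⟩ := h
            exact hne rfl
      · rw [uu, EE_of_not_le hzw, map_zero, mul_zero, zero_mul]
    rw [hz, smul_zero]
  · intro h; exact absurd (Finset.mem_univ _) h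

lemma not_both_zero (hbij : Function.Bijective φ)
    (htriple : ∀ f g, φ (f * g * f) = φ f * φ g * φ f)
    {x y : X} (hxy : x < y) : ¬(aa φ x y = 0 ∧ bb φ x y = 0) := by
  rintro ⟨ha, hb⟩
  have h0 : uu φ x y = 0 := by rw [u_decomp htriple hxy, ha, hb, add_zero]
  have : EE F x y = 0 := by
    apply hbij.1
    rw [map_zero]
    exact h0
  exact EE_ne_zero hxy.le this

lemma dichot (hbij : Function.Bijective φ)
    (hsq : ∀ f, φ (f * f) = φ f * φ f)
    (htriple : ∀ f g, φ (f * g * f) = φ f * φ g * φ f)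
    {x y : X} (hxy : x < y) : aa φ x y = 0 ∨ bb φ x y = 0 := by
  by_cases ha : aa φ x y = 0
  · exact Or.inl ha
  right
  obtain ⟨v, hv⟩ := hbij.2 (aa φ x y)
  have h1 := clemma_a hsq htriple v hxy
  have h2 := clemma_b hsq htriple v hxy
  rw [hv] at h1 h2
  have e1 : ff φ x * aa φ x y * ff φ y = aa φ x y := by
    rw [aa]
    simp only [mul_assoc]
    rw [ff_idem hsq y, mcollapse (ff_idem hsq x)]
  have e2 : ff φ y * aa φ x y * ff φ x = 0 := by
    rw [aa]
    simp only [mul_assoc]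
    rw [mzero_left (ff_orth hsq htriple (ne_of_gt hxy))]
  rw [e1] at h1
  rw [e2] at h2
  have hc : v x y = 1 := by
    by_contra hc
    have hz : (1 - v x y) • aa φ x y = 0 := by
      rw [sub_smul, one_smul, ← h1, sub_self]
    rcases smul_eq_zero.1 hz with h | h
    · rw [sub_eq_zero] at h
      exact hc h.symm
    · exact ha h
  rw [hc, one_smul] at h2
  exact h2.symm

lemma chain_lemma (hbij : Function.Bijective φ)
    (hsq : ∀ f, φ (f * f) = φ f * φ f)
    (htriple : ∀ f g, φ (f * g * f) = φ f * φ g * φ f)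
    {x y z : X} (h1 : x < y) (h2 : y < z) :
    aa φ x z = aa φ x y * aa φ y z ∧ bb φ x z = bb φ y z * bb φ x y := by
  have hxz : x < z := h1.trans h2
  have key : uu φ x z = aa φ x y * aa φ y z + bb φ y z * bb φ x y := by
    have h := jordan2 hsq (EE F x y) (EE F y z)
    rw [EE_mul_EE h1.le h2.le, if_pos rfl, EE_mul_EE h2.le h1.le,
      if_neg (ne_of_gt hxz), add_zero] at h
    have h' : uu φ x z = uu φ x y * uu φ y z + uu φ y z * uu φ x y := h
    rw [u_decomp htriple h1, u_decomp htriple h2] at h'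
    simp only [mul_add, add_mul] at h'
    have hxy' : x ≠ y := ne_of_lt h1
    have hyz' : y ≠ z := ne_of_lt h2
    have hxz' : x ≠ z := ne_of_lt hxz
    have t1 : aa φ x y * bb φ y z = 0 := by
      rw [aa, bb]
      exact tri_tri_zero (ff_orth hsq htriple hyz')
    have t2 : bb φ x y * aa φ y z = 0 := by
      rw [aa, bb]
      exact tri_tri_zero (ff_orth hsq htriple hxy')
    have t3 : bb φ x y * bb φ y z = 0 := by
      rw [bb, bb]
      exact tri_tri_zero (ff_orth hsq htriple hxz')
    have t4 : aa φ y z * aa φ x y = 0 := by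
      rw [aa, aa]
      exact tri_tri_zero (ff_orth hsq htriple (Ne.symm hxz'))
    have t5 : aa φ y z * bb φ x y = 0 := by
      rw [aa, bb]
      exact tri_tri_zero (ff_orth hsq htriple (Ne.symm hyz'))
    have t6 : bb φ y z * aa φ x y = 0 := by
      rw [aa, bb]
      exact tri_tri_zero (ff_orth hsq htriple (Ne.symm hxy'))
    rw [t1, t2, t3, t4, t5, t6] at h'
    rw [h']
    abel
  have hu : uu φ x z = aa φ x y * aa φ y z + bb φ y z * bb φ x y := key
  constructor
  · rw [aa, hu, mul_add, add_mul]
    have e1 : ff φ x * (aa φ x y * aa φ y z) * ff φ z = aa φ x y * aa φ y z := by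
      rw [aa, aa]
      simp only [mul_assoc]
      rw [ff_idem hsq z, mcollapse (ff_idem hsq x), mcollapse (ff_idem hsq y)]
    have e2 : ff φ x * (bb φ y z * bb φ x y) * ff φ z = 0 := by
      rw [bb, bb]
      simp only [mul_assoc]
      rw [mzero_left (ff_orth hsq htriple (ne_of_lt hxz))]
    rw [e1, e2, add_zero]
  · rw [bb, hu, mul_add, add_mul]
    have e1 : ff φ z * (aa φ x y * aa φ y z) * ff φ x = 0 := by
      rw [aa, aa]
      simp only [mul_assoc]
      rw [mzero_left (ff_orth hsq htriple (ne_of_gt hxz))]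
    have e2 : ff φ z * (bb φ y z * bb φ x y) * ff φ x = bb φ y z * bb φ x y := by
      rw [bb, bb]
      simp only [mul_assoc]
      rw [ff_idem hsq x, mcollapse (ff_idem hsq z), mcollapse (ff_idem hsq y)]
    rw [e1, e2, zero_add]

lemma ff_pivot (hbij : Function.Bijective φ)
    (hsq : ∀ f, φ (f * f) = φ f * φ f)
    (htriple : ∀ f g, φ (f * g * f) = φ f * φ g * φ f) (t : X) :
    ∃ u0 : X → F, u0 ≠ 0 ∧
      ∀ w ∈ LinearMap.range (toLin (ff φ t)), ∃ c : F, w = c • u0 := by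
  apply rank_one_system (ff φ)
  · intro s t'
    split_ifs with h
    · subst h; exact ff_idem hsq s
    · exact ff_orth hsq htriple h
  · exact ff_sum (phi_one hbij hsq htriple)
  · exact ff_ne_zero hbij

lemma lambda_case (hbij : Function.Bijective φ)
    (hsq : ∀ f, φ (f * f) = φ f * φ f)
    (htriple : ∀ f g, φ (f * g * f) = φ f * φ g * φ f)
    {x y z : X} (hxy : x < y) (hzy : z < y) (hxz : x ≠ z)
    (ha : aa φ x y ≠ 0) (hb : bb φ z y ≠ 0) : False := by
  have hbxy : bb φ x y = 0 := (dichot hbij hsq htriple hxy).resolve_left ha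
  have hazy : aa φ z y = 0 := (dichot hbij hsq htriple hzy).resolve_right hb
  have h := jordan2 hsq (EE F x y) (EE F z y)
  rw [EE_mul_EE hxy.le hzy.le, if_neg (ne_of_gt hzy), EE_mul_EE hzy.le hxy.le,
    if_neg (ne_of_gt hxy), add_zero, map_zero] at h
  have S : uu φ x y * uu φ z y + uu φ z y * uu φ x y = 0 := h.symm
  rw [u_decomp htriple hxy, u_decomp htriple hzy, hbxy, hazy, add_zero, zero_add] at S
  have e2 : bb φ z y * aa φ x y = 0 := by
    rw [aa, bb]
    exact tri_tri_zero (ff_orth hsq htriple (Ne.symm hxz))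
  rw [e2, add_zero] at S
  have hp : aa φ x y * ff φ y = aa φ x y := by
    rw [aa, mul_assoc, ff_idem hsq]
  have hq : ff φ y * bb φ z y = bb φ z y := by
    rw [bb]
    simp only [← mul_assoc]
    rw [ff_idem hsq]
  exact mul_ne_zero_of_pivot (ff φ y) (aa φ x y) (bb φ z y)
      (ff_pivot hbij hsq htriple y) hp hq ha hb S

lemma v_case (hbij : Function.Bijective φ)
    (hsq : ∀ f, φ (f * f) = φ f * φ f)
    (htriple : ∀ f g, φ (f * g * f) = φ f * φ g * φ f)
    {p q r : X} (hpq : p < q) (hpr : p < r) (hqr : q ≠ r)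
    (ha : aa φ p q ≠ 0) (hb : bb φ p r ≠ 0) : False := by
  have hbpq : bb φ p q = 0 := (dichot hbij hsq htriple hpq).resolve_left ha
  have hapr : aa φ p r = 0 := (dichot hbij hsq htriple hpr).resolve_right hb
  have h := jordan2 hsq (EE F p q) (EE F p r)
  rw [EE_mul_EE hpq.le hpr.le, if_neg (ne_of_gt hpq), EE_mul_EE hpr.le hpq.le,
    if_neg (ne_of_gt hpr), add_zero, map_zero] at h
  have S : uu φ p q * uu φ p r + uu φ p r * uu φ p q = 0 := h.symm
  rw [u_decomp htriple hpq, u_decomp htriple hpr, hbpq, hapr, add_zero, zero_add] at S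
  have e1 : aa φ p q * bb φ p r = 0 := by
    rw [aa, bb]
    exact tri_tri_zero (ff_orth hsq htriple hqr)
  rw [e1, zero_add] at S
  have hp : bb φ p r * ff φ p = bb φ p r := by
    rw [bb, mul_assoc, ff_idem hsq]
  have hq : ff φ p * aa φ p q = aa φ p q := by
    rw [aa]
    simp only [← mul_assoc]
    rw [ff_idem hsq]
  exact mul_ne_zero_of_pivot (ff φ p) (bb φ p r) (aa φ p q)
      (ff_pivot hbij hsq htriple p) hp hq hb ha S

lemma chain_side (hbij : Function.Bijective φ)
    (hsq : ∀ f, φ (f * f) = φ f * φ f)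
    (htriple : ∀ f g, φ (f * g * f) = φ f * φ g * φ f)
    {x y z : X} (hxy : x < y) (hyz : y < z) :
    (bb φ x y = 0 ↔ bb φ y z = 0) := by
  have hxz : x < z := hxy.trans hyz
  constructor
  · intro hb
    by_contra hbyz
    have hayz : aa φ y z = 0 := (dichot hbij hsq htriple hyz).resolve_right hbyz
    refine not_both_zero hbij htriple hxz ⟨?_, ?_⟩
    · rw [(chain_lemma hbij hsq htriple hxy hyz).1, hayz, mul_zero]
    · rw [(chain_lemma hbij hsq htriple hxy hyz).2, hb, mul_zero]
  · intro hb
    by_contra hbxy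
    have haxy : aa φ x y = 0 := (dichot hbij hsq htriple hxy).resolve_right hbxy
    refine not_both_zero hbij htriple hxz ⟨?_, ?_⟩
    · rw [(chain_lemma hbij hsq htriple hxy hyz).1, haxy, zero_mul]
    · rw [(chain_lemma hbij hsq htriple hxy hyz).2, hb, zero_mul]

lemma share_side (hbij : Function.Bijective φ)
    (hsq : ∀ f, φ (f * f) = φ f * φ f)
    (htriple : ∀ f g, φ (f * g * f) = φ f * φ g * φ f)
    {x y z w : X} (hxy : x < y) (hzw : z < w)
    (hsh : x = z ∨ x = w ∨ y = z ∨ y = w) :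
    (bb φ x y = 0 ↔ bb φ z w = 0) := by
  by_cases hpq : (x, y) = (z, w)
  · rw [Prod.mk.injEq] at hpq
    obtain ⟨rfl, rfl⟩ := hpq
    exact Iff.rfl
  rcases hsh with rfl | rfl | rfl | rfl
  · -- V at x
    have hyw : y ≠ w := by
      rintro rfl; exact hpq rfl
    constructor
    · intro hb
      by_contra hbw
      have haxy : aa φ x y ≠ 0 := fun h => not_both_zero hbij htriple hxy ⟨h, hb⟩
      exact v_case hbij hsq htriple hxy hzw hyw haxy hbw
    · intro hb
      by_contra hby
      have haxw : aa φ x w ≠ 0 := fun h => not_both_zero hbij htriple hzw ⟨h, hb⟩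
      exact v_case hbij hsq htriple hzw hxy (Ne.symm hyw) haxw hby
  · -- chain z < x < y
    exact (chain_side hbij hsq htriple hzw hxy).symm
  · -- chain x < y < w
    exact chain_side hbij hsq htriple hxy hzw
  · -- Lambda at y
    have hxz : x ≠ z := by
      rintro rfl; exact hpq rfl
    constructor
    · intro hb
      by_contra hbz
      have haxy : aa φ x y ≠ 0 := fun h => not_both_zero hbij htriple hxy ⟨h, hb⟩
      exact lambda_case hbij hsq htriple hxy hzw hxz haxy hbz
    · intro hb
      by_contra hbx
      have hazy : aa φ z y ≠ 0 := fun h => not_both_zero hbij htriple hzw ⟨h, hb⟩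
      exact lambda_case hbij hsq htriple hzw hxy (Ne.symm hxz) hazy hbx

lemma transfer (hbij : Function.Bijective φ)
    (hsq : ∀ f, φ (f * f) = φ f * φ f)
    (htriple : ∀ f g, φ (f * g * f) = φ f * φ g * φ f)
    {s t : X} (hst : Relation.ReflTransGen (fun a b : X => a ≤ b ∨ b ≤ a) s t) :
    ∀ x y z w : X, x < y → z < w → (x = s ∨ y = s) → (z = t ∨ w = t) →
      (bb φ x y = 0 ↔ bb φ z w = 0) := by
  induction hst with
  | refl =>
    intro x y z w hxy hzw hs ht
    apply share_side hbij hsq htriple hxy hzw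
    rcases hs with rfl | rfl <;> rcases ht with h | h <;> tauto
  | tail _ hbc ih =>
    rename_i b c _
    intro x y z w hxy hzw hs ht
    by_cases hbceq : b = c
    · subst hbceq
      exact ih x y z w hxy hzw hs ht
    rcases hbc with h1 | h1
    · have hbc' : b < c := lt_of_le_of_ne h1 hbceq
      have step1 := ih x y b c hxy hbc' hs (Or.inl rfl)
      have step2 : bb φ b c = 0 ↔ bb φ z w = 0 := by
        apply share_side hbij hsq htriple hbc' hzw
        rcases ht with rfl | rfl <;> tauto
      exact step1.trans step2
    · have hcb' : c < b := lt_of_le_of_ne h1 (Ne.symm hbceq)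
      have step1 := ih x y c b hxy hcb' hs (Or.inr rfl)
      have step2 : bb φ c b = 0 ↔ bb φ z w = 0 := by
        apply share_side hbij hsq htriple hcb' hzw
        rcases ht with rfl | rfl <;> tauto
      exact step1.trans step2

lemma side_const (hconn : ∀ x y : X, Relation.ReflTransGen (fun a b : X => a ≤ b ∨ b ≤ a) x y)
    (hbij : Function.Bijective φ)
    (hsq : ∀ f, φ (f * f) = φ f * φ f)
    (htriple : ∀ f g, φ (f * g * f) = φ f * φ g * φ f) :
    (∀ x y : X, x < y → bb φ x y = 0) ∨ (∀ x y : X, x < y → aa φ x y = 0) := by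
  by_cases hex : ∃ p : X × X, p.1 < p.2
  · obtain ⟨⟨x₀, y₀⟩, h₀⟩ := hex
    by_cases hside : bb φ x₀ y₀ = 0
    · left
      intro x y hxy
      exact (transfer hbij hsq htriple (hconn y₀ x) x₀ y₀ x y h₀ hxy
        (Or.inr rfl) (Or.inl rfl)).1 hside
    · right
      intro x y hxy
      have h := transfer hbij hsq htriple (hconn y₀ x) x₀ y₀ x y h₀ hxy
        (Or.inr rfl) (Or.inl rfl)
      have hb : bb φ x y ≠ 0 := fun h0 => hside (h.2 h0)
      exact (dichot hbij hsq htriple hxy).resolve_right hb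
  · left
    intro x y hxy
    exact absurd ⟨(x, y), hxy⟩ hex

lemma key_mul (hbij : Function.Bijective φ)
    (hsq : ∀ f, φ (f * f) = φ f * φ f)
    (htriple : ∀ f g, φ (f * g * f) = φ f * φ g * φ f)
    (hA : ∀ x y : X, x < y → bb φ x y = 0) :
    ∀ p q : X × X, φ (EE F p.1 p.2 * EE F q.1 q.2)
      = φ (EE F p.1 p.2) * φ (EE F q.1 q.2) := by
  rintro ⟨x, y⟩ ⟨z, w⟩
  dsimp only
  by_cases hxy : x ≤ y
  swap
  · rw [EE_of_not_le hxy, zero_mul, map_zero, zero_mul]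
  by_cases hzw : z ≤ w
  swap
  · rw [EE_of_not_le hzw, mul_zero, map_zero, mul_zero]
  rcases eq_or_lt_of_le hxy with rfl | hxy'
  · rcases eq_or_lt_of_le hzw with rfl | hzw'
    · -- diagonal * diagonal
      rw [EE_mul_EE le_rfl le_rfl]
      by_cases hxz : x = z
      · subst hxz
        rw [if_pos rfl]
        exact (ff_idem hsq x).symm
      · rw [if_neg hxz, map_zero]
        exact (ff_orth hsq htriple hxz).symm
    · -- diagonal * strict
      rw [EE_mul_EE le_rfl hzw]
      by_cases hxz : x = z
      · rcases hxz with rfl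
        rw [if_pos rfl]
        show uu φ x w = ff φ x * uu φ x w
        conv_lhs => rw [u_decomp htriple hzw', hA _ _ hzw', add_zero]
        conv_rhs => rw [u_decomp htriple hzw', hA _ _ hzw', add_zero]
        rw [aa]
        simp only [← mul_assoc]
        rw [ff_idem hsq]
      · rw [if_neg hxz, map_zero]
        show (0 : IncidenceAlgebra F X) = ff φ x * uu φ z w
        conv_rhs => rw [u_decomp htriple hzw', hA _ _ hzw', add_zero]
        rw [aa]
        simp only [← mul_assoc]
        rw [ff_orth hsq htriple hxz, zero_mul, zero_mul]
  · rcases eq_or_lt_of_le hzw with rfl | hzw'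
    · -- strict * diagonal
      rw [EE_mul_EE hxy le_rfl]
      by_cases hyz : y = z
      · rcases hyz with rfl
        rw [if_pos rfl]
        show uu φ x y = uu φ x y * ff φ y
        conv_lhs => rw [u_decomp htriple hxy', hA _ _ hxy', add_zero]
        conv_rhs => rw [u_decomp htriple hxy', hA _ _ hxy', add_zero]
        rw [aa, mul_assoc (ff φ x * uu φ x y), ff_idem hsq]
      · rw [if_neg hyz, map_zero]
        show (0 : IncidenceAlgebra F X) = uu φ x y * ff φ z
        conv_rhs => rw [u_decomp htriple hxy', hA _ _ hxy', add_zero]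
        rw [aa, mul_assoc (ff φ x * uu φ x y), ff_orth hsq htriple hyz, mul_zero]
    · -- strict * strict
      rw [EE_mul_EE hxy hzw]
      by_cases hyz : y = z
      · rcases hyz with rfl
        rw [if_pos rfl]
        have hxw : x < w := hxy'.trans hzw'
        show uu φ x w = uu φ x y * uu φ y w
        conv_lhs => rw [u_decomp htriple hxw, hA _ _ hxw, add_zero]
        conv_rhs => rw [u_decomp htriple hxy', hA _ _ hxy', add_zero,
          u_decomp htriple hzw', hA _ _ hzw', add_zero]
        exact (chain_lemma hbij hsq htriple hxy' hzw').1
      · rw [if_neg hyz, map_zero]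
        show (0 : IncidenceAlgebra F X) = uu φ x y * uu φ z w
        conv_rhs => rw [u_decomp htriple hxy', hA _ _ hxy', add_zero,
          u_decomp htriple hzw', hA _ _ hzw', add_zero]
        rw [aa, aa]
        exact (tri_tri_zero (ff_orth hsq htriple hyz)).symm

lemma key_anti (hbij : Function.Bijective φ)
    (hsq : ∀ f, φ (f * f) = φ f * φ f)
    (htriple : ∀ f g, φ (f * g * f) = φ f * φ g * φ f)
    (hB : ∀ x y : X, x < y → aa φ x y = 0) :
    ∀ p q : X × X, φ (EE F p.1 p.2 * EE F q.1 q.2)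
      = φ (EE F q.1 q.2) * φ (EE F p.1 p.2) := by
  rintro ⟨x, y⟩ ⟨z, w⟩
  dsimp only
  by_cases hxy : x ≤ y
  swap
  · rw [EE_of_not_le hxy, zero_mul, map_zero, mul_zero]
  by_cases hzw : z ≤ w
  swap
  · rw [EE_of_not_le hzw, mul_zero, map_zero, zero_mul]
  rcases eq_or_lt_of_le hxy with rfl | hxy'
  · rcases eq_or_lt_of_le hzw with rfl | hzw'
    · rw [EE_mul_EE le_rfl le_rfl]
      by_cases hxz : x = z
      · subst hxz
        rw [if_pos rfl]
        exact (ff_idem hsq x).symm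
      · rw [if_neg hxz, map_zero]
        exact (ff_orth hsq htriple (fun h => hxz h.symm)).symm
    · -- diagonal * strict : φ(E_xx E_zw) = φ(E_zw) φ(E_xx)
      rw [EE_mul_EE le_rfl hzw]
      by_cases hxz : x = z
      · rcases hxz with rfl
        rw [if_pos rfl]
        show uu φ x w = uu φ x w * ff φ x
        conv_lhs => rw [u_decomp htriple hzw', hB _ _ hzw', zero_add]
        conv_rhs => rw [u_decomp htriple hzw', hB _ _ hzw', zero_add]
        rw [bb, mul_assoc (ff φ w * uu φ x w), ff_idem hsq]
      · rw [if_neg hxz, map_zero]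
        show (0 : IncidenceAlgebra F X) = uu φ z w * ff φ x
        conv_rhs => rw [u_decomp htriple hzw', hB _ _ hzw', zero_add]
        rw [bb, mul_assoc (ff φ w * uu φ z w), ff_orth hsq htriple (fun h => hxz h.symm),
          mul_zero]
  · rcases eq_or_lt_of_le hzw with rfl | hzw'
    · -- strict * diagonal : φ(E_xy E_zz) = φ(E_zz) φ(E_xy)
      rw [EE_mul_EE hxy le_rfl]
      by_cases hyz : y = z
      · rcases hyz with rfl
        rw [if_pos rfl]
        show uu φ x y = ff φ y * uu φ x y
        conv_lhs => rw [u_decomp htriple hxy', hB _ _ hxy', zero_add]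
        conv_rhs => rw [u_decomp htriple hxy', hB _ _ hxy', zero_add]
        rw [bb]
        simp only [← mul_assoc]
        rw [ff_idem hsq]
      · rw [if_neg hyz, map_zero]
        show (0 : IncidenceAlgebra F X) = ff φ z * uu φ x y
        conv_rhs => rw [u_decomp htriple hxy', hB _ _ hxy', zero_add]
        rw [bb]
        simp only [← mul_assoc]
        rw [ff_orth hsq htriple (fun h => hyz h.symm), zero_mul, zero_mul]
    · -- strict * strict
      rw [EE_mul_EE hxy hzw]
      by_cases hyz : y = z
      · rcases hyz with rfl
        rw [if_pos rfl]
        have hxw : x < w := hxy'.trans hzw'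
        show uu φ x w = uu φ y w * uu φ x y
        conv_lhs => rw [u_decomp htriple hxw, hB _ _ hxw, zero_add]
        conv_rhs => rw [u_decomp htriple hxy', hB _ _ hxy', zero_add,
          u_decomp htriple hzw', hB _ _ hzw', zero_add]
        exact (chain_lemma hbij hsq htriple hxy' hzw').2
      · rw [if_neg hyz, map_zero]
        show (0 : IncidenceAlgebra F X) = uu φ z w * uu φ x y
        conv_rhs => rw [u_decomp htriple hxy', hB _ _ hxy', zero_add,
          u_decomp htriple hzw', hB _ _ hzw', zero_add]
        rw [bb, bb]
        exact (tri_tri_zero (ff_orth hsq htriple (fun h => hyz h.symm))).symm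

lemma expand_prod (v w : IncidenceAlgebra F X) :
    v * w = ∑ p : X × X, ∑ q : X × X,
      (v p.1 p.2 * w q.1 q.2) • (EE F p.1 p.2 * EE F q.1 q.2) := by
  conv_lhs => rw [decomp v, decomp w]
  rw [Finset.sum_mul_sum]
  refine Finset.sum_congr rfl fun p _ => Finset.sum_congr rfl fun q _ => ?_
  rw [smul_mul_assoc, mul_smul_comm, smul_smul]

lemma phi_decomp (v : IncidenceAlgebra F X) :
    φ v = ∑ p : X × X, v p.1 p.2 • φ (EE F p.1 p.2) := by
  conv_lhs => rw [decomp v]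
  rw [map_sum]
  exact Finset.sum_congr rfl fun p _ => map_smul φ _ _

lemma assemble_mul
    (hkey : ∀ p q : X × X, φ (EE F p.1 p.2 * EE F q.1 q.2)
      = φ (EE F p.1 p.2) * φ (EE F q.1 q.2)) (v w : IncidenceAlgebra F X) :
    φ (v * w) = φ v * φ w := by
  calc φ (v * w) = ∑ p : X × X, ∑ q : X × X,
      (v p.1 p.2 * w q.1 q.2) • (φ (EE F p.1 p.2) * φ (EE F q.1 q.2)) := by
        rw [expand_prod v w, map_sum]
        refine Finset.sum_congr rfl fun p _ => ?_
        rw [map_sum]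
        refine Finset.sum_congr rfl fun q _ => ?_
        rw [map_smul, hkey p q]
    _ = (∑ p : X × X, v p.1 p.2 • φ (EE F p.1 p.2))
        * (∑ q : X × X, w q.1 q.2 • φ (EE F q.1 q.2)) := by
        rw [Finset.sum_mul_sum]
        refine Finset.sum_congr rfl fun p _ => Finset.sum_congr rfl fun q _ => ?_
        rw [smul_mul_assoc, mul_smul_comm, smul_smul]
    _ = φ v * φ w := by rw [← phi_decomp, ← phi_decomp]

lemma assemble_anti
    (hkey : ∀ p q : X × X, φ (EE F p.1 p.2 * EE F q.1 q.2)
      = φ (EE F q.1 q.2) * φ (EE F p.1 p.2)) (v w : IncidenceAlgebra F X) :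
    φ (v * w) = φ w * φ v := by
  calc φ (v * w) = ∑ p : X × X, ∑ q : X × X,
      (v p.1 p.2 * w q.1 q.2) • (φ (EE F q.1 q.2) * φ (EE F p.1 p.2)) := by
        rw [expand_prod v w, map_sum]
        refine Finset.sum_congr rfl fun p _ => ?_
        rw [map_sum]
        refine Finset.sum_congr rfl fun q _ => ?_
        rw [map_smul, hkey p q]
    _ = ∑ q : X × X, ∑ p : X × X,
      (w q.1 q.2 * v p.1 p.2) • (φ (EE F q.1 q.2) * φ (EE F p.1 p.2)) := by
        rw [Finset.sum_comm]
        refine Finset.sum_congr rfl fun q _ => Finset.sum_congr rfl fun p _ => ?_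
        rw [mul_comm (v p.1 p.2)]
    _ = (∑ q : X × X, w q.1 q.2 • φ (EE F q.1 q.2))
        * (∑ p : X × X, v p.1 p.2 • φ (EE F p.1 p.2)) := by
        rw [Finset.sum_mul_sum]
        refine Finset.sum_congr rfl fun q _ => Finset.sum_congr rfl fun p _ => ?_
        rw [smul_mul_assoc, mul_smul_comm, smul_smul]
    _ = φ w * φ v := by rw [← phi_decomp, ← phi_decomp]

end Main

end StmtAux


open StmtAux in
/-- every Jordan automorphism of the incidence algebra of a finite connected
poset over a field is an automorphism or an anti-automorphism. -/
theorem stmt_1 {X : Type*} [PartialOrder X] [Fintype X] [LocallyFiniteOrder X] [DecidableEq X]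
    {F : Type*} [Field F]
    (hconn : PosetConnected X)
    (φ : IncidenceAlgebra F X →ₗ[F] IncidenceAlgebra F X)
    (hbij : Function.Bijective φ)
    (hsq : ∀ f : IncidenceAlgebra F X, φ (f * f) = φ f * φ f)
    (htriple : ∀ f g : IncidenceAlgebra F X, φ (f * g * f) = φ f * φ g * φ f) :
    (∀ f g : IncidenceAlgebra F X, φ (f * g) = φ f * φ g) ∨
      (∀ f g : IncidenceAlgebra F X, φ (f * g) = φ g * φ f) := by
  rcases side_const hconn hbij hsq htriple with hA | hB
  · exact Or.inl (assemble_mul (key_mul hbij hsq htriple hA))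
  · exact Or.inr (assemble_anti (key_anti hbij hsq htriple hB))
end

section
/- Let X be a finite poset and F a field with char(F) = 2 and |F| > 2. Then every bijective F-linear map φ: I(X,F) → I(X,F) that preserves idempotents is a Lie automorphism of I(X,F), i.e. φ(fg − gf) = φ(f)φ(g) − φ(g)φ(f) for all f, g ∈ I(X,F). -/
open IncidenceAlgebra Finset

section Single
variable {F X : Type*} [Field F] [PartialOrder X] [Fintype X] [LocallyFiniteOrder X]
  [DecidableEq X]

open scoped Classical in
/-- The matrix-unit element of the incidence algebra. Zero unless `a ≤ b`. -/
noncomputable def sgl (F : Type*) [Field F] {X : Type*} [PartialOrder X] (a b : X) :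
    IncidenceAlgebra F X :=
  ⟨fun x y => if x = a ∧ y = b ∧ a ≤ b then 1 else 0, by
    intro x y h
    rw [if_neg]
    rintro ⟨rfl, rfl, hle⟩
    exact h hle⟩

open scoped Classical in
lemma sgl_apply (a b x y : X) :
    sgl F a b x y = if x = a ∧ y = b ∧ a ≤ b then (1 : F) else 0 := by
  simp [sgl]

lemma sgl_of_not_le {a b : X} (h : ¬ a ≤ b) : sgl F a b = 0 := by
  ext x y _
  classical
  rw [sgl_apply, if_neg (by tauto), IncidenceAlgebra.zero_apply]

lemma sgl_mul_of_ne {a b c d : X} (h : b ≠ c) : sgl F a b * sgl F c d = 0 := by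
  classical
  ext x y _
  rw [IncidenceAlgebra.mul_apply, IncidenceAlgebra.zero_apply]
  refine Finset.sum_eq_zero fun z hz => ?_
  rw [sgl_apply, sgl_apply]
  split_ifs <;> simp_all

lemma sgl_mul_trans {a b d : X} (hab : a ≤ b) (hbd : b ≤ d) :
    sgl F a b * sgl F b d = sgl F a d := by
  classical
  ext x y hxy
  rw [IncidenceAlgebra.mul_apply, sgl_apply]
  by_cases hx : x = a
  · by_cases hy : y = d
    · subst hx; subst hy
      rw [if_pos ⟨rfl, rfl, hab.trans hbd⟩]
      rw [Finset.sum_eq_single b]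
      · rw [sgl_apply, sgl_apply, if_pos ⟨rfl, rfl, hab⟩, if_pos ⟨rfl, rfl, hbd⟩, one_mul]
      · intro z hz hzb
        rw [sgl_apply, sgl_apply]
        split_ifs <;> simp_all
      · intro hb
        exact absurd (Finset.mem_Icc.2 ⟨hab, hbd⟩) hb
    · rw [if_neg (by tauto)]
      refine Finset.sum_eq_zero fun z hz => ?_
      rw [sgl_apply, sgl_apply]
      split_ifs <;> simp_all
  · rw [if_neg (by tauto)]
    refine Finset.sum_eq_zero fun z hz => ?_
    rw [sgl_apply]
    split_ifs <;> simp_all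

end Single

set_option linter.unusedSectionVars false

section Decomp
variable {F X : Type*} [Field F] [PartialOrder X] [Fintype X] [LocallyFiniteOrder X]
  [DecidableEq X]

lemma ia_sum_apply {ι : Type*} (s : Finset ι) (g : ι → IncidenceAlgebra F X) (a b : X) :
    (∑ i ∈ s, g i) a b = ∑ i ∈ s, g i a b := by
  classical
  induction s using Finset.cons_induction with
  | empty => simp [IncidenceAlgebra.zero_apply]
  | cons i s hi ih => rw [Finset.sum_cons, Finset.sum_cons, IncidenceAlgebra.add_apply, ih]

lemma eq_sum_sgl (f : IncidenceAlgebra F X) :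
    f = ∑ p ∈ (Finset.univ ×ˢ Finset.univ : Finset (X × X)), f p.1 p.2 • sgl F p.1 p.2 := by
  classical
  ext x y hxy
  rw [ia_sum_apply]
  rw [Finset.sum_eq_single (x, y)]
  · rw [IncidenceAlgebra.constSMul_apply, sgl_apply, if_pos ⟨rfl, rfl, hxy⟩, smul_eq_mul, mul_one]
  · intro p _ hp
    rw [IncidenceAlgebra.constSMul_apply, sgl_apply]
    split_ifs with h1
    · exact absurd (Prod.ext h1.1.symm h1.2.1.symm) hp
    · simp
  · intro h
    exact absurd (Finset.mem_product.2 ⟨Finset.mem_univ _, Finset.mem_univ _⟩) h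

end Decomp

section LemA
variable {F A : Type*} [Field F] [Ring A] [Algebra F A]

lemma lemA {μ : F} (hμ0 : μ ≠ 0) (hμ1 : μ ≠ 1) {u v : A} (hu : u * u = u)
    (h1 : (u + v) * (u + v) = u + v) (h2 : (u + μ • v) * (u + μ • v) = u + μ • v) :
    v * v = 0 ∧ u * v + v * u = v := by
  have hx1 : (u + v) * (u + v) = u + ((u * v + v * u) + v * v) := by
    rw [add_mul, mul_add, mul_add, hu]; abel
  have e1 : (u * v + v * u) + v * v = v := by
    have := hx1.symm.trans h1
    exact add_left_cancel this
  have hx2 : (u + μ • v) * (u + μ • v) = u + (μ • (u * v + v * u) + (μ * μ) • (v * v)) := by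
    rw [add_mul, mul_add, mul_add, hu, mul_smul_comm, smul_mul_assoc, smul_mul_assoc,
      mul_smul_comm, smul_smul, smul_add]
    abel
  have e2 : μ • (u * v + v * u) + (μ * μ) • (v * v) = μ • v := add_left_cancel (hx2.symm.trans h2)
  have e4 : μ • (u * v + v * u) + (μ * μ) • (v * v)
      = μ • (u * v + v * u) + μ • (v * v) := by
    rw [e2, ← smul_add, e1]
  have e4' : (μ * μ) • (v * v) = μ • (v * v) := add_left_cancel e4
  have hne : μ * μ - μ ≠ 0 := by
    have : μ * μ - μ = μ * (μ - 1) := by ring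
    rw [this]
    exact mul_ne_zero hμ0 (sub_ne_zero.2 hμ1)
  have e5 : (μ * μ - μ) • (v * v) = 0 := by rw [sub_smul, e4', sub_self]
  have hvv : v * v = 0 := by
    have : v * v = (μ * μ - μ)⁻¹ • ((μ * μ - μ) • (v * v)) := by
      rw [smul_smul, inv_mul_cancel₀ hne, one_smul]
    rw [this, e5, smul_zero]
  refine ⟨hvv, ?_⟩
  rw [hvv, add_zero] at e1
  exact e1

end LemA

section Main
variable {X F : Type*} [PartialOrder X] [Fintype X] [LocallyFiniteOrder X] [DecidableEq X]
  [Field F]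

lemma char2 (hchar : ringChar F = 2) (z : IncidenceAlgebra F X) : z + z = 0 := by
  have h2 : (2 : F) = 0 := by
    haveI : CharP F 2 := ringChar.of_eq hchar
    exact_mod_cast CharP.cast_eq_zero F 2
  calc z + z = (2 : F) • z := (two_smul F z).symm
  _ = 0 := by rw [h2, zero_smul]

lemma exists_ne01 {F : Type*} [Field F] (hcard : 2 < Cardinal.mk F) :
    ∃ μ : F, μ ≠ 0 ∧ μ ≠ 1 := by
  obtain ⟨z, hz⟩ := Cardinal.exists_notMem_of_length_lt ([0, 1] : List F) (by simpa using hcard)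
  exact ⟨z, fun h => hz (by simp [h]), fun h => hz (by simp [h])⟩

variable {μ : F} (hμ0 : μ ≠ 0) (hμ1 : μ ≠ 1)
variable (φ : IncidenceAlgebra F X →ₗ[F] IncidenceAlgebra F X)
variable (hidem : ∀ f : IncidenceAlgebra F X, f * f = f → φ f * φ f = φ f)

include hμ0 hμ1 hidem

lemma lemAphi {u v : IncidenceAlgebra F X} (hu : u * u = u) (hv : v * v = 0)
    (huv : u * v + v * u = v) :
    φ v * φ v = 0 ∧ φ u * φ v + φ v * φ u = φ v := by
  have h1 : (u + v) * (u + v) = u + v := by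
    have : (u + v) * (u + v) = u + ((u * v + v * u) + v * v) := by
      rw [add_mul, mul_add, mul_add, hu]; abel
    rw [this, huv, hv, add_zero]
  have h2 : (u + μ • v) * (u + μ • v) = u + μ • v := by
    have : (u + μ • v) * (u + μ • v) = u + (μ • (u * v + v * u) + (μ * μ) • (v * v)) := by
      rw [add_mul, mul_add, mul_add, hu, mul_smul_comm, smul_mul_assoc, smul_mul_assoc,
        mul_smul_comm, smul_smul, smul_add]
      abel
    rw [this, huv, hv, smul_zero, add_zero]
  have i1 := hidem _ h1
  rw [map_add] at i1
  have i2 := hidem _ h2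
  rw [map_add, map_smul] at i2
  exact lemA hμ0 hμ1 (hidem u hu) i1 i2

lemma lemBphi {u v : IncidenceAlgebra F X} (hu : u * u = u) (hv : v * v = v)
    (huv : u * v = 0) (hvu : v * u = 0) :
    φ u * φ v + φ v * φ u = 0 := by
  have hsum : (u + v) * (u + v) = u + v := by
    rw [add_mul, mul_add, mul_add, hu, hv, huv, hvu]; abel
  have i := hidem _ hsum
  rw [map_add] at i
  have iu := hidem u hu
  have iv := hidem v hv
  have hx : (φ u + φ v) * (φ u + φ v) = φ u + ((φ u * φ v + φ v * φ u) + φ v) := by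
    rw [add_mul, mul_add, mul_add, iu, iv]; abel
  have h3 := add_left_cancel (hx.symm.trans i)
  exact add_eq_right.mp h3

/-- square of off-diagonal image is zero, and diagonal-left relation -/
lemma fact3 {a b : X} (hab : a ≤ b) (hne : a ≠ b) :
    φ (sgl F a b) * φ (sgl F a b) = 0 ∧
      φ (sgl F a a) * φ (sgl F a b) + φ (sgl F a b) * φ (sgl F a a) = φ (sgl F a b) := by
  refine lemAphi hμ0 hμ1 φ hidem (sgl_mul_trans le_rfl le_rfl) (sgl_mul_of_ne (Ne.symm hne)) ?_
  rw [sgl_mul_trans le_rfl hab, sgl_mul_of_ne (Ne.symm hne), add_zero]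

lemma fact4 {a b : X} (hab : a ≤ b) (hne : a ≠ b) :
    φ (sgl F b b) * φ (sgl F a b) + φ (sgl F a b) * φ (sgl F b b) = φ (sgl F a b) := by
  refine (lemAphi hμ0 hμ1 φ hidem (sgl_mul_trans le_rfl le_rfl) (sgl_mul_of_ne (Ne.symm hne))
    ?_).2
  rw [sgl_mul_trans hab le_rfl, sgl_mul_of_ne (Ne.symm hne), zero_add]

lemma fact2 {a c : X} (hne : a ≠ c) :
    φ (sgl F a a) * φ (sgl F c c) + φ (sgl F c c) * φ (sgl F a a) = 0 :=
  lemBphi hμ0 hμ1 φ hidem (sgl_mul_trans le_rfl le_rfl) (sgl_mul_trans le_rfl le_rfl)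
    (sgl_mul_of_ne hne) (sgl_mul_of_ne (Ne.symm hne))

lemma fact5 {a b c : X} (hab : a ≤ b) (hne : a ≠ b) (hca : c ≠ a) (hcb : c ≠ b) :
    φ (sgl F c c) * φ (sgl F a b) + φ (sgl F a b) * φ (sgl F c c) = 0 := by
  have hw : (sgl F a a + sgl F a b) * (sgl F a a + sgl F a b) = sgl F a a + sgl F a b := by
    rw [add_mul, mul_add, mul_add, sgl_mul_trans le_rfl le_rfl, sgl_mul_trans le_rfl hab,
      sgl_mul_of_ne (Ne.symm hne), sgl_mul_of_ne (Ne.symm hne)]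
    abel
  have p1 : sgl F c c * (sgl F a a + sgl F a b) = 0 := by
    rw [mul_add, sgl_mul_of_ne hca, sgl_mul_of_ne hca, add_zero]
  have p2 : (sgl F a a + sgl F a b) * sgl F c c = 0 := by
    rw [add_mul, sgl_mul_of_ne (Ne.symm hca), sgl_mul_of_ne (Ne.symm hcb), add_zero]
  have h0 := lemBphi hμ0 hμ1 φ hidem (sgl_mul_trans le_rfl le_rfl) hw p1 p2
  rw [map_add] at h0
  have hre : φ (sgl F c c) * (φ (sgl F a a) + φ (sgl F a b)) +
      (φ (sgl F a a) + φ (sgl F a b)) * φ (sgl F c c) =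
      (φ (sgl F c c) * φ (sgl F a a) + φ (sgl F a a) * φ (sgl F c c)) +
      (φ (sgl F c c) * φ (sgl F a b) + φ (sgl F a b) * φ (sgl F c c)) := by noncomm_ring
  rw [hre, fact2 hμ0 hμ1 φ hidem hca] at h0
  rwa [zero_add] at h0

lemma fact6 {a b c d : X} (hab : a ≤ b) (hne : a ≠ b) (hcd : c ≤ d) (hne' : c ≠ d)
    (h1 : b ≠ c) (h2 : d ≠ a) :
    φ (sgl F a b) * φ (sgl F c d) + φ (sgl F c d) * φ (sgl F a b) = 0 := by
  have hvv : (sgl F a b + sgl F c d) * (sgl F a b + sgl F c d) = 0 := by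
    rw [add_mul, mul_add, mul_add, sgl_mul_of_ne (Ne.symm hne), sgl_mul_of_ne h1,
      sgl_mul_of_ne h2, sgl_mul_of_ne (Ne.symm hne')]
    abel
  have key : φ (sgl F a b + sgl F c d) * φ (sgl F a b + sgl F c d) = 0 := by
    rcases eq_or_ne a c with rfl | hac
    · have huv : sgl F a a * (sgl F a b + sgl F a d) + (sgl F a b + sgl F a d) * sgl F a a
          = sgl F a b + sgl F a d := by
        rw [mul_add, add_mul, sgl_mul_trans le_rfl hab, sgl_mul_trans le_rfl hcd,
          sgl_mul_of_ne (Ne.symm hne), sgl_mul_of_ne h2]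
        abel
      exact (lemAphi hμ0 hμ1 φ hidem (sgl_mul_trans le_rfl le_rfl) hvv huv).1
    · have hu : (sgl F a a + sgl F c c) * (sgl F a a + sgl F c c) = sgl F a a + sgl F c c := by
        rw [add_mul, mul_add, mul_add, sgl_mul_trans le_rfl le_rfl,
          sgl_mul_trans le_rfl le_rfl, sgl_mul_of_ne hac, sgl_mul_of_ne (Ne.symm hac)]
        abel
      have huv : (sgl F a a + sgl F c c) * (sgl F a b + sgl F c d)
          + (sgl F a b + sgl F c d) * (sgl F a a + sgl F c c)
          = sgl F a b + sgl F c d := by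
        rw [mul_add, mul_add, add_mul, add_mul, add_mul, add_mul,
          sgl_mul_trans le_rfl hab, sgl_mul_of_ne hac, sgl_mul_of_ne (Ne.symm hac),
          sgl_mul_trans le_rfl hcd, sgl_mul_of_ne (Ne.symm hne), sgl_mul_of_ne h1,
          sgl_mul_of_ne h2, sgl_mul_of_ne (Ne.symm hne')]
        abel
      exact (lemAphi hμ0 hμ1 φ hidem hu hvv huv).1
  rw [map_add] at key
  have hexp : (φ (sgl F a b) + φ (sgl F c d)) * (φ (sgl F a b) + φ (sgl F c d))
      = (φ (sgl F a b) * φ (sgl F a b) + φ (sgl F c d) * φ (sgl F c d))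
        + (φ (sgl F a b) * φ (sgl F c d) + φ (sgl F c d) * φ (sgl F a b)) := by noncomm_ring
  rw [hexp, (fact3 hμ0 hμ1 φ hidem hab hne).1, (fact3 hμ0 hμ1 φ hidem hcd hne').1,
    add_zero, zero_add] at key
  exact key

lemma fact7 {a b d : X} (hab : a ≤ b) (hbd : b ≤ d) (hne : a ≠ b) (hne' : b ≠ d)
    (hchar : ringChar F = 2) :
    φ (sgl F a b) * φ (sgl F b d) + φ (sgl F b d) * φ (sgl F a b) = φ (sgl F a d) := by
  have had : a ≠ d := by
    intro h
    exact hne (le_antisymm hab (by rw [h]; exact hbd))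
  have hex25 : ∀ p1 p2 p3 p4 p5 : IncidenceAlgebra F X,
      (p1 + p2 + p3 + p4 + p5) * (p1 + p2 + p3 + p4 + p5) =
      p1*p1 + p1*p2 + p1*p3 + p1*p4 + p1*p5 + p2*p1 + p2*p2 + p2*p3 + p2*p4 + p2*p5 +
      p3*p1 + p3*p2 + p3*p3 + p3*p4 + p3*p5 + p4*p1 + p4*p2 + p4*p3 + p4*p4 + p4*p5 +
      p5*p1 + p5*p2 + p5*p3 + p5*p4 + p5*p5 := by
    intros; noncomm_ring
  have q11 : sgl F a a * sgl F a a = sgl F a a := sgl_mul_trans le_rfl le_rfl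
  have q12 : sgl F a a * sgl F d d = 0 := sgl_mul_of_ne had
  have q13 : sgl F a a * sgl F a b = sgl F a b := sgl_mul_trans le_rfl hab
  have q14 : sgl F a a * sgl F b d = 0 := sgl_mul_of_ne hne
  have q15 : sgl F a a * sgl F a d = sgl F a d := sgl_mul_trans le_rfl (hab.trans hbd)
  have q21 : sgl F d d * sgl F a a = 0 := sgl_mul_of_ne (Ne.symm had)
  have q22 : sgl F d d * sgl F d d = sgl F d d := sgl_mul_trans le_rfl le_rfl
  have q23 : sgl F d d * sgl F a b = 0 := sgl_mul_of_ne (Ne.symm had)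
  have q24 : sgl F d d * sgl F b d = 0 := sgl_mul_of_ne (Ne.symm hne')
  have q25 : sgl F d d * sgl F a d = 0 := sgl_mul_of_ne (Ne.symm had)
  have q31 : sgl F a b * sgl F a a = 0 := sgl_mul_of_ne (Ne.symm hne)
  have q32 : sgl F a b * sgl F d d = 0 := sgl_mul_of_ne hne'
  have q33 : sgl F a b * sgl F a b = 0 := sgl_mul_of_ne (Ne.symm hne)
  have q34 : sgl F a b * sgl F b d = sgl F a d := sgl_mul_trans hab hbd
  have q35 : sgl F a b * sgl F a d = 0 := sgl_mul_of_ne (Ne.symm hne)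
  have q41 : sgl F b d * sgl F a a = 0 := sgl_mul_of_ne (Ne.symm had)
  have q42 : sgl F b d * sgl F d d = sgl F b d := sgl_mul_trans hbd le_rfl
  have q43 : sgl F b d * sgl F a b = 0 := sgl_mul_of_ne (Ne.symm had)
  have q44 : sgl F b d * sgl F b d = 0 := sgl_mul_of_ne (Ne.symm hne')
  have q45 : sgl F b d * sgl F a d = 0 := sgl_mul_of_ne (Ne.symm had)
  have q51 : sgl F a d * sgl F a a = 0 := sgl_mul_of_ne (Ne.symm had)
  have q52 : sgl F a d * sgl F d d = sgl F a d := sgl_mul_trans (hab.trans hbd) le_rfl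
  have q53 : sgl F a d * sgl F a b = 0 := sgl_mul_of_ne (Ne.symm had)
  have q54 : sgl F a d * sgl F b d = 0 := sgl_mul_of_ne (Ne.symm hne')
  have q55 : sgl F a d * sgl F a d = 0 := sgl_mul_of_ne (Ne.symm had)
  have hg' : (sgl F a a + sgl F d d + sgl F a b + sgl F b d + sgl F a d) *
      (sgl F a a + sgl F d d + sgl F a b + sgl F b d + sgl F a d) =
      (sgl F a a + sgl F d d + sgl F a b + sgl F b d + sgl F a d) +
      (sgl F a d + sgl F a d) := by
    rw [hex25, q11, q12, q13, q14, q15, q21, q22, q23, q24, q25, q31, q32, q33, q34, q35,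
      q41, q42, q43, q44, q45, q51, q52, q53, q54, q55]
    abel
  have hg : (sgl F a a + sgl F d d + sgl F a b + sgl F b d + sgl F a d) *
      (sgl F a a + sgl F d d + sgl F a b + sgl F b d + sgl F a d) =
      (sgl F a a + sgl F d d + sgl F a b + sgl F b d + sgl F a d) := by
    rw [hg', char2 hchar (sgl F a d), add_zero]
  have hphig := hidem _ hg
  simp only [map_add] at hphig
  have s11 : φ (sgl F a a) * φ (sgl F a a) = φ (sgl F a a) := hidem _ q11
  have s22 : φ (sgl F d d) * φ (sgl F d d) = φ (sgl F d d) := hidem _ q22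
  have sB : φ (sgl F a b) * φ (sgl F a b) = 0 := (fact3 hμ0 hμ1 φ hidem hab hne).1
  have sD : φ (sgl F b d) * φ (sgl F b d) = 0 := (fact3 hμ0 hμ1 φ hidem hbd hne').1
  have sE : φ (sgl F a d) * φ (sgl F a d) = 0 :=
    (fact3 hμ0 hμ1 φ hidem (hab.trans hbd) had).1
  have s12 : φ (sgl F a a) * φ (sgl F d d) + φ (sgl F d d) * φ (sgl F a a) = 0 :=
    fact2 hμ0 hμ1 φ hidem had
  have s13 : φ (sgl F a a) * φ (sgl F a b) + φ (sgl F a b) * φ (sgl F a a) = φ (sgl F a b) :=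
    (fact3 hμ0 hμ1 φ hidem hab hne).2
  have s14 : φ (sgl F a a) * φ (sgl F b d) + φ (sgl F b d) * φ (sgl F a a) = 0 :=
    fact5 hμ0 hμ1 φ hidem hbd hne' hne had
  have s15 : φ (sgl F a a) * φ (sgl F a d) + φ (sgl F a d) * φ (sgl F a a) = φ (sgl F a d) :=
    (fact3 hμ0 hμ1 φ hidem (hab.trans hbd) had).2
  have s23 : φ (sgl F d d) * φ (sgl F a b) + φ (sgl F a b) * φ (sgl F d d) = 0 :=
    fact5 hμ0 hμ1 φ hidem hab hne (Ne.symm had) (Ne.symm hne')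
  have s24 : φ (sgl F d d) * φ (sgl F b d) + φ (sgl F b d) * φ (sgl F d d) = φ (sgl F b d) :=
    fact4 hμ0 hμ1 φ hidem hbd hne'
  have s25 : φ (sgl F d d) * φ (sgl F a d) + φ (sgl F a d) * φ (sgl F d d) = φ (sgl F a d) :=
    fact4 hμ0 hμ1 φ hidem (hab.trans hbd) had
  have s35 : φ (sgl F a b) * φ (sgl F a d) + φ (sgl F a d) * φ (sgl F a b) = 0 :=
    fact6 hμ0 hμ1 φ hidem hab hne (hab.trans hbd) had (Ne.symm hne) (Ne.symm had)
  have s45 : φ (sgl F b d) * φ (sgl F a d) + φ (sgl F a d) * φ (sgl F b d) = 0 :=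
    fact6 hμ0 hμ1 φ hidem hbd hne' (hab.trans hbd) had (Ne.symm had) (Ne.symm hne')
  have hex : (φ (sgl F a a) + φ (sgl F d d) + φ (sgl F a b) + φ (sgl F b d) + φ (sgl F a d)) *
      (φ (sgl F a a) + φ (sgl F d d) + φ (sgl F a b) + φ (sgl F b d) + φ (sgl F a d)) =
      ((φ (sgl F a a) * φ (sgl F a a) + φ (sgl F d d) * φ (sgl F d d) +
        φ (sgl F a b) * φ (sgl F a b) + φ (sgl F b d) * φ (sgl F b d) +
        φ (sgl F a d) * φ (sgl F a d)) +
       ((φ (sgl F a a) * φ (sgl F d d) + φ (sgl F d d) * φ (sgl F a a)) +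
        (φ (sgl F a a) * φ (sgl F a b) + φ (sgl F a b) * φ (sgl F a a)) +
        (φ (sgl F a a) * φ (sgl F b d) + φ (sgl F b d) * φ (sgl F a a)) +
        (φ (sgl F a a) * φ (sgl F a d) + φ (sgl F a d) * φ (sgl F a a)) +
        (φ (sgl F d d) * φ (sgl F a b) + φ (sgl F a b) * φ (sgl F d d)) +
        (φ (sgl F d d) * φ (sgl F b d) + φ (sgl F b d) * φ (sgl F d d)) +
        (φ (sgl F d d) * φ (sgl F a d) + φ (sgl F a d) * φ (sgl F d d)) +
        (φ (sgl F a b) * φ (sgl F a d) + φ (sgl F a d) * φ (sgl F a b)) +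
        (φ (sgl F b d) * φ (sgl F a d) + φ (sgl F a d) * φ (sgl F b d)))) +
      (φ (sgl F a b) * φ (sgl F b d) + φ (sgl F b d) * φ (sgl F a b)) := by
    noncomm_ring
  rw [hex, s11, s22, sB, sD, sE, s12, s13, s14, s15, s23, s24, s25, s35, s45] at hphig
  have hstep : (φ (sgl F a a) + φ (sgl F d d) + φ (sgl F a b) + φ (sgl F b d)) +
      (φ (sgl F a b) * φ (sgl F b d) + φ (sgl F b d) * φ (sgl F a b)) +
      (φ (sgl F a d) + φ (sgl F a d)) =
      (φ (sgl F a a) + φ (sgl F d d) + φ (sgl F a b) + φ (sgl F b d)) + φ (sgl F a d) := by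
    rw [← hphig]; abel
  rw [char2 hchar (φ (sgl F a d)), add_zero] at hstep
  exact add_left_cancel hstep

lemma keylem (hchar : ringChar F = 2) (a b c d : X) (hab : a ≤ b) (hcd : c ≤ d) :
    φ (sgl F a b * sgl F c d + sgl F c d * sgl F a b) =
      φ (sgl F a b) * φ (sgl F c d) + φ (sgl F c d) * φ (sgl F a b) := by
  by_cases heq : a = c ∧ b = d
  · obtain ⟨rfl, rfl⟩ := heq
    rw [char2 hchar, map_zero, char2 hchar]
  · by_cases hab' : a = b
    · subst hab'
      by_cases hcd' : c = d
      · subst hcd'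
        have hac : a ≠ c := fun h => heq ⟨h, h⟩
        rw [sgl_mul_of_ne hac, sgl_mul_of_ne (Ne.symm hac), add_zero, map_zero,
          fact2 hμ0 hμ1 φ hidem hac]
      · rcases eq_or_ne a c with rfl | h1
        · rw [sgl_mul_trans le_rfl hcd, sgl_mul_of_ne (Ne.symm hcd'), add_zero]
          exact ((fact3 hμ0 hμ1 φ hidem hcd hcd').2).symm
        · rcases eq_or_ne a d with rfl | h2
          · rw [sgl_mul_of_ne h1, sgl_mul_trans hcd le_rfl, zero_add]
            exact (fact4 hμ0 hμ1 φ hidem hcd hcd').symm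
          · rw [sgl_mul_of_ne h1, sgl_mul_of_ne (Ne.symm h2), add_zero, map_zero,
              fact5 hμ0 hμ1 φ hidem hcd hcd' h1 h2]
    · by_cases hcd' : c = d
      · subst hcd'
        rcases eq_or_ne c a with rfl | h1
        · rw [sgl_mul_of_ne (Ne.symm hab'), sgl_mul_trans le_rfl hab, zero_add,
            add_comm (φ (sgl F c b) * φ (sgl F c c))]
          exact ((fact3 hμ0 hμ1 φ hidem hab hab').2).symm
        · rcases eq_or_ne c b with rfl | h2
          · rw [sgl_mul_trans hab le_rfl, sgl_mul_of_ne h1, add_zero,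
              add_comm (φ (sgl F a c) * φ (sgl F c c))]
            exact (fact4 hμ0 hμ1 φ hidem hab hab').symm
          · rw [sgl_mul_of_ne (Ne.symm h2), sgl_mul_of_ne h1, add_zero, map_zero,
              add_comm (φ (sgl F a b) * φ (sgl F c c))]
            exact (fact5 hμ0 hμ1 φ hidem hab hab' h1 h2).symm
      · rcases eq_or_ne b c with rfl | h1
        · have hda : d ≠ a := by
            intro h
            exact hab' (le_antisymm hab (by rw [← h]; exact hcd))
          rw [sgl_mul_trans hab hcd, sgl_mul_of_ne hda, add_zero]
          exact (fact7 hμ0 hμ1 φ hidem hab hcd hab' hcd' hchar).symm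
        · rcases eq_or_ne d a with rfl | h2
          · rw [sgl_mul_of_ne h1, sgl_mul_trans hcd hab, zero_add,
              add_comm (φ (sgl F d b) * φ (sgl F c d))]
            exact (fact7 hμ0 hμ1 φ hidem hcd hab hcd' hab' hchar).symm
          · rw [sgl_mul_of_ne h1, sgl_mul_of_ne h2, add_zero, map_zero,
              fact6 hμ0 hμ1 φ hidem hab hab' hcd hcd' h1 h2]

end Main

section TTdef
variable {X F : Type*} [PartialOrder X] [Fintype X] [LocallyFiniteOrder X] [DecidableEq X]
  [Field F]

noncomputable def TT (φ : IncidenceAlgebra F X →ₗ[F] IncidenceAlgebra F X) :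
    IncidenceAlgebra F X →ₗ[F] IncidenceAlgebra F X →ₗ[F] IncidenceAlgebra F X :=
  LinearMap.mk₂ F
    (fun f g => φ (f * g + g * f) - (φ f * φ g + φ g * φ f))
    (fun m₁ m₂ n => by
      rw [show (m₁ + m₂) * n + n * (m₁ + m₂) = (m₁ * n + n * m₁) + (m₂ * n + n * m₂) from by
        noncomm_ring, map_add, map_add φ m₁ m₂]
      noncomm_ring)
    (fun c m n => by
      rw [show (c • m) * n + n * (c • m) = c • (m * n + n * m) from by
        rw [smul_mul_assoc, mul_smul_comm, smul_add], map_smul, map_smul]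
      rw [smul_mul_assoc, mul_smul_comm, ← smul_add, ← smul_sub])
    (fun m n₁ n₂ => by
      rw [show m * (n₁ + n₂) + (n₁ + n₂) * m = (m * n₁ + n₁ * m) + (m * n₂ + n₂ * m) from by
        noncomm_ring, map_add, map_add φ n₁ n₂]
      noncomm_ring)
    (fun c m n => by
      rw [show m * (c • n) + (c • n) * m = c • (m * n + n * m) from by
        rw [smul_mul_assoc, mul_smul_comm, smul_add], map_smul, map_smul]
      rw [smul_mul_assoc, mul_smul_comm, ← smul_add, ← smul_sub])

lemma TT_apply (φ : IncidenceAlgebra F X →ₗ[F] IncidenceAlgebra F X)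
    (f g : IncidenceAlgebra F X) :
    TT φ f g = φ (f * g + g * f) - (φ f * φ g + φ g * φ f) := rfl

end TTdef

/-- over a field of characteristic 2 with more than 2 elements, every bijective
linear idempotent preserver of the incidence algebra of a finite poset is a Lie
automorphism. -/
theorem stmt_4 {X : Type*} [PartialOrder X] [Fintype X] [LocallyFiniteOrder X] [DecidableEq X]
    {F : Type*} [Field F] (hchar : ringChar F = 2) (hcard : 2 < Cardinal.mk F)
    (φ : IncidenceAlgebra F X →ₗ[F] IncidenceAlgebra F X)
    (hbij : Function.Bijective φ)
    (hidem : ∀ f : IncidenceAlgebra F X, f * f = f → φ f * φ f = φ f) :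
    ∀ f g : IncidenceAlgebra F X, φ (f * g - g * f) = φ f * φ g - φ g * φ f := by
  obtain ⟨μ, hμ0, hμ1⟩ := exists_ne01 hcard
  intro f g
  have hsub : ∀ x y : IncidenceAlgebra F X, x - y = x + y := by
    intro x y
    rw [sub_eq_add_neg, neg_eq_of_add_eq_zero_left (char2 hchar y)]
  rw [hsub, hsub]
  have hTT0 : ∀ p q : X × X, TT φ (sgl F p.1 p.2) (sgl F q.1 q.2) = 0 := by
    intro p q
    by_cases h1 : p.1 ≤ p.2
    · by_cases h2 : q.1 ≤ q.2
      · rw [TT_apply, sub_eq_zero]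
        exact keylem hμ0 hμ1 φ hidem hchar _ _ _ _ h1 h2
      · rw [sgl_of_not_le h2, map_zero]
    · rw [sgl_of_not_le h1, map_zero, LinearMap.zero_apply]
  have hrow : ∀ q : X × X, TT φ f (sgl F q.1 q.2) = 0 := by
    intro q
    conv_lhs => rw [eq_sum_sgl f]
    rw [map_sum, LinearMap.sum_apply]
    refine Finset.sum_eq_zero fun p _ => ?_
    rw [map_smul, LinearMap.smul_apply, hTT0 p q, smul_zero]
  have hmain : TT φ f g = 0 := by
    conv_lhs => rw [eq_sum_sgl g]
    rw [map_sum]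
    refine Finset.sum_eq_zero fun q _ => ?_
    rw [map_smul, hrow q, smul_zero]
  rw [TT_apply] at hmain
  exact sub_eq_zero.mp hmain
end

section
/- Let X be a finite connected poset, F a field, and φ a Jordan automorphism of I(X,F), i.e. a bijective F-linear map with φ(f²) = φ(f)² and φ(fgf) = φ(f)φ(g)φ(f) for all f, g. Then there exist an invertible element β ∈ I(X,F) and a bijection λ: X → X such that φ(e_x) = β e_{λ(x)} β⁻¹ for all x ∈ X. -/
open Finset IncidenceAlgebra

/-- The standard basis element `e_{xy}` of the incidence algebra (for `x ≤ y`):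
the function taking value `1` at `(x, y)` and `0` elsewhere. -/
def eSingle {R : Type*} [Zero R] [One R] {X : Type*} [PartialOrder X] [DecidableEq X]
    (x y : X) (hxy : x ≤ y) : IncidenceAlgebra R X where
  toFun u v := if u = x ∧ v = y then 1 else 0
  eq_zero_of_not_le' u v huv := by
    show (if u = x ∧ v = y then (1 : R) else 0) = 0
    split_ifs with hc
    · obtain ⟨rfl, rfl⟩ := hc; exact absurd hxy huv
    · rfl

section Aux

set_option linter.unusedSectionVars false

variable {R : Type*} [Ring R] {X : Type*} [PartialOrder X] [DecidableEq X] [LocallyFiniteOrder X]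

lemma eSingle_apply (x y : X) (h : x ≤ y) (u v : X) :
    (eSingle x y h : IncidenceAlgebra R X) u v = if u = x ∧ v = y then 1 else 0 := rfl

/-- Evaluation at a pair, as an additive monoid hom. -/
def evalAM (u v : X) : IncidenceAlgebra R X →+ R where
  toFun f := f u v
  map_zero' := rfl
  map_add' _ _ := rfl

lemma IA_sum_apply {ι : Type*} (s : Finset ι) (f : ι → IncidenceAlgebra R X) (u v : X) :
    (∑ i ∈ s, f i) u v = ∑ i ∈ s, f i u v :=
  map_sum (evalAM u v) f s

lemma mul_apply_self (f g : IncidenceAlgebra R X) (t : X) :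
    (f * g) t t = f t t * g t t := by
  rw [IncidenceAlgebra.mul_apply, Finset.Icc_self, Finset.sum_singleton]

lemma eSingle_mul_eSingle (x y : X) :
    (eSingle x x le_rfl : IncidenceAlgebra R X) * eSingle y y le_rfl =
      if x = y then eSingle x x le_rfl else 0 := by
  ext u v _
  rw [IncidenceAlgebra.mul_apply]
  split_ifs with hxy
  · subst hxy
    rw [eSingle_apply]
    split_ifs with h
    · obtain ⟨rfl, rfl⟩ := h
      rw [Finset.Icc_self, Finset.sum_singleton]
      show (if _ then (1:R) else 0) * (if _ then (1:R) else 0) = _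
      simp
    · apply Finset.sum_eq_zero
      intro z hz
      rw [eSingle_apply, eSingle_apply]
      split_ifs with h1 h2 <;> simp_all
  · rw [IncidenceAlgebra.zero_apply]
    apply Finset.sum_eq_zero
    intro z hz
    rw [eSingle_apply, eSingle_apply]
    split_ifs with h1 h2 <;> simp_all

lemma sum_eSingle [Fintype X] :
    (∑ x : X, (eSingle x x le_rfl : IncidenceAlgebra R X)) = 1 := by
  ext u v _
  rw [IA_sum_apply, IncidenceAlgebra.one_apply]
  simp only [eSingle_apply]
  split_ifs with h
  · subst h
    rw [Finset.sum_eq_single u]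
    · simp
    · intro b _ hb
      simp [Ne.symm hb]
    · simp
  · apply Finset.sum_eq_zero
    intro z hz
    split_ifs with h1 <;> simp_all

/-- Zero diagonal implies small powers vanish on large intervals. -/
lemma pow_apply_ne_zero [Fintype X] (f : IncidenceAlgebra R X) (hf : ∀ t, f t t = 0) :
    ∀ (k : ℕ) (x y : X), (f ^ k) x y ≠ 0 → k < (Finset.Icc x y).card := by
  intro k
  induction k with
  | zero =>
    intro x y h
    rw [pow_zero, IncidenceAlgebra.one_apply] at h
    split_ifs at h with hxy
    · subst hxy
      simp [Finset.Icc_self]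
    · simp at h
  | succ k ih =>
    intro x y h
    rw [pow_succ'] at h
    rw [IncidenceAlgebra.mul_apply] at h
    obtain ⟨z, hz, hzne⟩ := Finset.exists_ne_zero_of_sum_ne_zero h
    have hfz : f x z ≠ 0 := fun h0 => hzne (by rw [h0, zero_mul])
    have hk : (f ^ k) z y ≠ 0 := fun h0 => hzne (by rw [h0, mul_zero])
    have hxz : x ≤ z := (Finset.mem_Icc.1 hz).1
    have hxnez : x ≠ z := by rintro rfl; exact hfz (hf x)
    have hzy : z ≤ y := (Finset.mem_Icc.1 hz).2
    have hsub : Finset.Icc z y ⊆ Finset.Icc x y := by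
      intro w hw
      rw [Finset.mem_Icc] at hw ⊢
      exact ⟨hxz.trans hw.1, hw.2⟩
    have hxnotin : x ∉ Finset.Icc z y := by
      rw [Finset.mem_Icc]
      rintro ⟨hzx, -⟩
      exact hxnez (le_antisymm hxz hzx)
    have : (Finset.Icc z y).card < (Finset.Icc x y).card :=
      Finset.card_lt_card (Finset.ssubset_iff_of_subset hsub |>.2
        ⟨x, Finset.mem_Icc.2 ⟨le_rfl, hxz.trans hzy⟩, hxnotin⟩)
    exact lt_of_lt_of_le (Nat.succ_lt_succ (ih z y hk)) this

lemma nilpotent_of_diag_zero [Fintype X] (f : IncidenceAlgebra R X) (hf : ∀ t, f t t = 0) :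
    f ^ (Fintype.card X) = 0 := by
  ext x y _
  rw [IncidenceAlgebra.zero_apply]
  by_contra h
  have := pow_apply_ne_zero f hf (Fintype.card X) x y h
  exact absurd (Finset.card_le_univ _) (not_le.2 this)

end Aux

/-- for a Jordan automorphism `φ` of the incidence algebra of a finite connected
poset over a field, there are an invertible element `β` and a bijection `λ` of `X` with
`φ(e_x) = β e_{λ(x)} β⁻¹` for all `x`. -/
theorem stmt_6 {X : Type*} [PartialOrder X] [Fintype X] [LocallyFiniteOrder X] [DecidableEq X]
    {F : Type*} [Field F]
    (hconn : PosetConnected X)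
    (φ : IncidenceAlgebra F X →ₗ[F] IncidenceAlgebra F X)
    (hbij : Function.Bijective φ)
    (hsq : ∀ f : IncidenceAlgebra F X, φ (f * f) = φ f * φ f)
    (htriple : ∀ f g : IncidenceAlgebra F X, φ (f * g * f) = φ f * φ g * φ f) :
    ∃ (β : (IncidenceAlgebra F X)ˣ) (l : X ≃ X),
      ∀ x : X, φ (eSingle x x le_rfl) =
        (β : IncidenceAlgebra F X) * eSingle (l x) (l x) le_rfl * ((β⁻¹ : _) : IncidenceAlgebra F X) := by
  classical
  set e : X → IncidenceAlgebra F X := fun x => eSingle x x le_rfl with he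
  set a : X → IncidenceAlgebra F X := fun x => φ (e x) with ha
  -- φ(1) = 1
  have hone : φ 1 = 1 := by
    obtain ⟨u, hu⟩ := hbij.2 1
    have h1 : ∀ g, φ g = φ 1 * φ g * φ 1 := by
      intro g
      have := htriple 1 g
      rwa [one_mul, mul_one] at this
    have h2 : (1 : IncidenceAlgebra F X) = φ 1 * 1 * φ 1 := by
      conv_lhs => rw [← hu]
      rw [h1 u, hu]
    have h3 : φ 1 = φ 1 * φ 1 := by
      have := hsq 1
      rwa [one_mul] at this
    calc φ 1 = φ 1 * φ 1 := h3
      _ = φ 1 * 1 * φ 1 := by rw [mul_one]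
      _ = 1 := h2.symm
  -- polarization
  have hpol : ∀ f g, φ (f * g + g * f) = φ f * φ g + φ g * φ f := by
    intro f g
    have h := hsq (f + g)
    have e1 : (f + g) * (f + g) = f * f + (f * g + g * f) + g * g := by noncomm_ring
    have e2 : (φ f + φ g) * (φ f + φ g)
        = φ f * φ f + (φ f * φ g + φ g * φ f) + φ g * φ g := by noncomm_ring
    have hfg : φ (f + g) = φ f + φ g := map_add φ f g
    rw [e1, map_add, map_add, hsq f, hsq g, hfg, e2] at h
    exact add_left_cancel (add_right_cancel h)
  -- basic identities for e
  have he_mul : ∀ x y : X, e x * e y = if x = y then e x else 0 := fun x y =>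
    eSingle_mul_eSingle x y
  have he_sq : ∀ x, e x * e x = e x := by intro x; rw [he_mul]; simp
  -- a is a family of orthogonal idempotents
  have ha_sq : ∀ x, a x * a x = a x := by
    intro x
    rw [ha, ← hsq, he_sq]
  have ha_orth : ∀ x y, x ≠ y → a x * a y = 0 := by
    intro x y hne
    have hxy0 : e x * e y = 0 := by rw [he_mul]; simp [hne]
    have hyx0 : e y * e x = 0 := by rw [he_mul]; simp [Ne.symm hne]
    have hJ : a x * a y + a y * a x = 0 := by
      have := hpol (e x) (e y)
      rw [hxy0, hyx0, add_zero, map_zero] at this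
      exact this.symm
    have htr : a x * a y * a x = 0 := by
      have := htriple (e x) (e y)
      rw [hxy0, zero_mul, map_zero] at this
      exact this.symm
    have hneg : a x * a y = -(a y * a x) := eq_neg_of_add_eq_zero_left hJ
    calc a x * a y = a x * a x * a y := by rw [ha_sq]
      _ = a x * (a x * a y) := by rw [mul_assoc]
      _ = a x * (-(a y * a x)) := by rw [← hneg]
      _ = -(a x * a y * a x) := by rw [mul_neg, mul_assoc]
      _ = 0 := by rw [htr, neg_zero]
  have ha_sum : ∑ x : X, a x = 1 := by
    rw [ha]
    simp only
    rw [← map_sum, ← he]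
    have : (∑ x : X, e x) = 1 := sum_eSingle
    rw [this, hone]
  have ha_ne : ∀ x, a x ≠ 0 := by
    intro x h0
    have : e x = 0 := hbij.1 (show φ (e x) = φ 0 by rw [map_zero]; exact h0)
    have h1 : (e x) x x = 1 := by rw [he]; simp [eSingle_apply]
    rw [this, IncidenceAlgebra.zero_apply] at h1
    exact one_ne_zero h1.symm
  -- diagonal values
  set d : X → X → F := fun x t => a x t t with hd
  have hd01 : ∀ x t, d x t = 0 ∨ d x t = 1 := by
    intro x t
    have : d x t * d x t = d x t := by
      rw [hd]; simp only
      rw [← mul_apply_self, ha_sq]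
    rcases eq_or_ne (d x t) 0 with h0 | h0
    · left; exact h0
    · right
      exact mul_left_cancel₀ h0 (this.trans (mul_one _).symm)
  have hd_orth : ∀ x y t, x ≠ y → d x t * d y t = 0 := by
    intro x y t hne
    rw [hd]; simp only
    rw [← mul_apply_self, ha_orth x y hne, IncidenceAlgebra.zero_apply]
  have hd_sum : ∀ t, ∑ x : X, d x t = 1 := by
    intro t
    rw [hd]; simp only
    rw [← IA_sum_apply, ha_sum, IncidenceAlgebra.one_apply]
    simp
  -- μ : the unique x with d x t ≠ 0
  have hex : ∀ t : X, ∃ x, d x t ≠ 0 := by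
    intro t
    by_contra h
    push_neg at h
    have := hd_sum t
    rw [Finset.sum_eq_zero (fun x _ => h x)] at this
    exact one_ne_zero this.symm
  choose μ hμ using hex
  have huniq : ∀ t x, d x t ≠ 0 → x = μ t := by
    intro t x hx
    by_contra hne
    exact hx (by
      have := hd_orth x (μ t) t hne
      rcases mul_eq_zero.1 this with h | h
      · exact h
      · exact absurd h (hμ t))
  -- μ is bijective
  have hμsurj : Function.Surjective μ := by
    intro x
    by_contra h
    push_neg at h
    have hdz : ∀ t, a x t t = 0 := by
      intro t
      by_contra h0
      exact h t (huniq t x h0).symm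
    have hnil : a x ^ Fintype.card X = 0 := nilpotent_of_diag_zero (a x) hdz
    have hpos : 0 < Fintype.card X := Fintype.card_pos_iff.2 ⟨x⟩
    have hpow : ∀ k : ℕ, a x ^ (k + 1) = a x := by
      intro k
      induction k with
      | zero => rw [pow_one]
      | succ k ih => rw [pow_succ, ih, ha_sq]
    obtain ⟨m, hm⟩ := Nat.exists_eq_add_of_lt hpos
    rw [hm, zero_add] at hnil
    exact ha_ne x (by rw [← hpow m]; rw [add_comm] at hnil ⊢; exact hnil)
  have hμbij : Function.Bijective μ := (Finite.surjective_iff_bijective).1 hμsurj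
  set E : X ≃ X := Equiv.ofBijective μ hμbij with hE
  set l : X ≃ X := E.symm with hl
  have hμl : ∀ x, μ (l x) = x := fun x => E.apply_symm_apply x
  have hlμ : ∀ t, l (μ t) = t := fun t => E.symm_apply_apply t
  -- the diagonal of a x is the indicator of l x
  have hdiag : ∀ x t, d x t = if t = l x then 1 else 0 := by
    intro x t
    split_ifs with h
    · subst h
      have hne := hμ (l x)
      rw [hμl x] at hne
      rcases hd01 x (l x) with h0 | h1
      · exact absurd h0 hne
      · exact h1
    · by_contra hne
      have hd0 : d x t ≠ 0 := by
        intro h0; rw [h0] at hne; exact hne rfl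
      have := huniq t x hd0
      subst this
      exact h (hlμ t).symm
  -- the conjugating element
  set β : IncidenceAlgebra F X := ∑ x : X, a x * e (l x) with hβ
  have key1 : ∀ y, a y * β = β * e (l y) := by
    intro y
    rw [hβ, Finset.mul_sum, Finset.sum_mul]
    rw [Finset.sum_eq_single y (fun x _ hne => by
        rw [← mul_assoc, ha_orth y x (Ne.symm hne), zero_mul]) (by simp)]
    rw [Finset.sum_eq_single y (fun x _ hne => by
        rw [mul_assoc, he_mul]
        have : l x ≠ l y := fun h => hne (l.injective h)
        simp [this]) (by simp)]
    rw [← mul_assoc, ha_sq, mul_assoc, he_sq]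
  have key2 : ∀ t, β t t = 1 := by
    intro t
    rw [hβ, IA_sum_apply]
    have hterm : ∀ x, (a x * e (l x)) t t = if t = l x then 1 else 0 := by
      intro x
      rw [mul_apply_self]
      have h1 : (e (l x)) t t = if t = l x then 1 else 0 := by
        rw [he]; simp only [eSingle_apply, and_self]
      rw [h1, show (a x) t t = d x t from rfl, hdiag]
      split_ifs <;> simp
    simp only [hterm]
    rw [Finset.sum_eq_single (μ t)]
    · rw [if_pos (hlμ t).symm]
    · intro x _ hne
      rw [if_neg]
      intro h
      exact hne (by rw [h, hμl])
    · simp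
  -- β is a unit
  have hβunit : IsUnit β := by
    have hsubdiag : ∀ t, (β - 1) t t = 0 := by
      intro t
      have : (β - 1) t t = β t t - (1 : IncidenceAlgebra F X) t t :=
        map_sub (evalAM t t) β 1
      rw [this, key2, IncidenceAlgebra.one_apply]
      simp
    have hnil : IsNilpotent (β - 1) :=
      ⟨Fintype.card X, nilpotent_of_diag_zero _ hsubdiag⟩
    have := hnil.isUnit_one_add
    rwa [add_sub_cancel] at this
  obtain ⟨B, hB⟩ := hβunit
  refine ⟨B, l, fun x => ?_⟩
  have hkey := key1 x
  rw [← hB] at hkey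
  have : a x = (B : IncidenceAlgebra F X) * e (l x) * (B⁻¹ : _) := by
    calc a x = a x * B * (B⁻¹ : _) := by
          rw [mul_assoc]
          rw [Units.mul_inv, mul_one]
      _ = (B : IncidenceAlgebra F X) * e (l x) * (B⁻¹ : _) := by rw [hkey]
  exact this
end
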